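/- arXiv:0805.2038 — 9 statements merged into one kernel-verified Lean document; each statement's English description precedes it below -/
import Mathlib

section
/- Let X be a Polish space and ≤ an F_σ quasi-order on X (i.e., ≤ is reflexive, transitive, and an F_σ subset of X²). If (X,≤) contains a strictly increasing ω₁-chain (x_ξ)_{ξ<ω₁} (meaning x_ξ ≤ x_ζ and x_ζ ≰ x_ξ whenever ξ < ζ), then there exists a perfect subset P of X such that any two distinct elements of P are incomparable with respect to ≤. -/
open Set

section OmegaOneChain

open Cardinal Ordinal TopologicalSpace Metric Set

universe u v

/- ### Ordinal counting lemmas -/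

lemma countable_Iic_of_lt {ζ : Ordinal.{v}} (h : ζ < (Cardinal.aleph 1).ord) : {ξ : Ordinal.{v} | ξ ≤ ζ}.Countable := by
  have h1 : {ξ : Ordinal.{v} | ξ ≤ ζ} = Iio (Order.succ ζ) := by
    ext ξ; simp [Order.lt_succ_iff]
  rw [Cardinal.countable_iff_lt_aleph_one, h1, Ordinal.mk_Iio_ordinal, Cardinal.lift_lt_aleph_one,
    Ordinal.card_succ]
  have h2 : ζ.card ≤ ℵ₀ := by
    have := (Cardinal.lt_ord.mp h)
    rwa [← Cardinal.succ_aleph0, Order.lt_succ_iff] at this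
  calc ζ.card + 1 ≤ ℵ₀ + ℵ₀ := add_le_add h2 (Cardinal.one_le_aleph0)
    _ = ℵ₀ := Cardinal.aleph0_add_aleph0
    _ < ℵ₁ := Cardinal.aleph0_lt_aleph_one

lemma uncountable_Iio_omega1 : ¬ (Set.Iio ((Cardinal.aleph 1).ord : Ordinal.{v})).Countable := by
  rw [Cardinal.countable_iff_lt_aleph_one, Ordinal.mk_Iio_ordinal]
  simp only [Cardinal.lift_lt_aleph_one, Cardinal.card_ord]
  exact lt_irrefl _

lemma exists_gt_of_uncountable {A : Set Ordinal.{v}} (hA : A ⊆ Set.Iio (Cardinal.aleph 1).ord)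
    (hAu : ¬ A.Countable) {ζ : Ordinal.{v}} (hζ : ζ < (Cardinal.aleph 1).ord) : ∃ η ∈ A, ζ < η := by
  by_contra h
  push_neg at h
  exact hAu ((countable_Iic_of_lt hζ).mono h)


/- ### Condensation points and tails -/

section Topo
variable {X : Type u} [TopologicalSpace X] [SecondCountableTopology X] (x : Ordinal.{v} → X)

lemma cond_trim {A : Set Ordinal.{v}} (hAu : ¬ A.Countable) :
    ∃ B, B ⊆ A ∧ ¬ B.Countable ∧
      ∀ ξ ∈ B, ∀ U : Set X, IsOpen U → x ξ ∈ U → ¬ (A ∩ x ⁻¹' U).Countable := by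
  obtain ⟨b, bc, -, hb⟩ := exists_countable_basis X
  set Bad : Set Ordinal.{v} := ⋃ u ∈ {u ∈ b | (A ∩ x ⁻¹' u).Countable}, (A ∩ x ⁻¹' u) with hBad
  have hBadc : Bad.Countable :=
    Set.Countable.biUnion (bc.mono (sep_subset _ _)) fun u hu => hu.2
  refine ⟨A \ Bad, diff_subset, fun hc => hAu ?_, ?_⟩
  · have : A ⊆ (A \ Bad) ∪ Bad := fun ξ hξ => by
      by_cases hξ' : ξ ∈ Bad
      · exact Or.inr hξ'
      · exact Or.inl ⟨hξ, hξ'⟩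
    exact (hc.union hBadc).mono this
  · rintro ξ ⟨hξA, hξB⟩ U hU hxU hcnt
    obtain ⟨u, hub, hxu, huU⟩ := hb.exists_subset_of_mem_open hxU hU
    exact hξB (mem_biUnion ⟨hub, hcnt.mono (inter_subset_inter_right _ (preimage_mono huU))⟩
      ⟨hξA, hxu⟩)

lemma sub_tail {A : Set Ordinal.{v}} (hA : A ⊆ Set.Iio (Cardinal.aleph 1).ord)
    (hAu : ¬ A.Countable) :
    ∃ ξ ∈ A, ∀ ζ < (Cardinal.aleph 1).ord,
      x ξ ∈ closure (x '' {η | η ∈ A ∧ ζ < η}) := by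
  by_contra h
  push_neg at h
  obtain ⟨b, bc, -, hb⟩ := exists_countable_basis X
  set G : Set (Set X) := {u ∈ b | ∃ ζ < (Cardinal.aleph 1).ord, ∀ η ∈ A, ζ < η → x η ∉ u}
    with hG
  have hcover : A ⊆ ⋃ u ∈ G, {ξ ∈ A | x ξ ∈ u} := by
    intro ξ hξ
    obtain ⟨ζ, hζ, hncl⟩ := h ξ hξ
    rw [_root_.mem_closure_iff] at hncl
    push_neg at hncl
    obtain ⟨U, hU, hxU, hUS⟩ := hncl
    obtain ⟨u, hub, hxu, huU⟩ := hb.exists_subset_of_mem_open hxU hU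
    refine mem_biUnion (show u ∈ G from ⟨hub, ζ, hζ, fun η hη hζη hxη => ?_⟩) ⟨hξ, hxu⟩
    have hc : x η ∈ U ∩ x '' {η | η ∈ A ∧ ζ < η} := ⟨huU hxη, ⟨η, ⟨hη, hζη⟩, rfl⟩⟩
    rw [hUS] at hc
    exact hc
  refine hAu ((Set.Countable.biUnion (bc.mono (sep_subset _ _)) ?_).mono hcover)
  rintro u ⟨hub, ζ, hζ, hu⟩
  refine (countable_Iic_of_lt hζ).mono ?_
  rintro ξ ⟨hξA, hxξ⟩
  by_contra hle
  exact hu ξ hξA (lt_of_not_ge fun hc => hle hc) hxξ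


/- ### The two-set claim -/

variable (le : X → X → Prop)

lemma claim2
    (hchain : ∀ ξ ζ : Ordinal.{v}, ξ < ζ → ζ < (Cardinal.aleph 1).ord →
      le (x ξ) (x ζ) ∧ ¬ le (x ζ) (x ξ))
    {A B : Set Ordinal.{v}} (hA : A ⊆ Set.Iio (Cardinal.aleph 1).ord)
    (hB : B ⊆ Set.Iio (Cardinal.aleph 1).ord)
    (hAu : ¬ A.Countable) (hBu : ¬ B.Countable)
    {G : Set (X × X)} (hGc : IsClosed G) (hGle : ∀ p ∈ G, le p.1 p.2) :
    ∃ ξ ∈ A, ∃ ζ ∈ B, ξ ≠ ζ ∧ (x ξ, x ζ) ∉ G ∧ (x ζ, x ξ) ∉ G := by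
  by_contra h
  obtain ⟨ξ0, hξ0A, htail⟩ := sub_tail x hA hAu
  obtain ⟨ζ0, hζ0B, hξζ⟩ := exists_gt_of_uncountable hB hBu (hA hξ0A)
  have key : ∀ η ∈ A, ζ0 < η → (x ζ0, x η) ∈ G := by
    intro η hη hlt
    have h1 : (x η, x ζ0) ∉ G := fun hm => (hchain ζ0 η hlt (hA hη)).2 (hGle _ hm)
    by_contra h2
    exact h ⟨η, hη, ζ0, hζ0B, ne_of_gt hlt, h1, h2⟩
  have hcl := htail ζ0 (hB hζ0B)
  have hslice : IsClosed {y : X | (x ζ0, y) ∈ G} :=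
    hGc.preimage (Continuous.prodMk_right (x ζ0))
  have hsub : x '' {η | η ∈ A ∧ ζ0 < η} ⊆ {y : X | (x ζ0, y) ∈ G} := by
    rintro y ⟨η, ⟨hη, hlt⟩, rfl⟩
    exact key η hη hlt
  have hmem : (x ζ0, x ξ0) ∈ G := (hslice.closure_subset_iff.mpr hsub) hcl
  exact (hchain ξ0 ζ0 hξζ (hB hζ0B)).2 (hGle _ hmem)


end Topo

/- ### Nodes -/

structure PNode (X : Type u) : Type (max u (v + 1)) where
  A : Set Ordinal.{v}
  c : X
  r : ℝ

section MetricPart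

variable {X : Type u} [MetricSpace X] (le : X → X → Prop) (x : Ordinal.{v} → X)

def NodeOK (N : PNode.{u, v} X) : Prop :=
  N.A ⊆ Set.Iio (Cardinal.aleph 1).ord ∧ ¬ N.A.Countable ∧
    (∀ ξ ∈ N.A, x ξ ∈ ball N.c N.r) ∧ 0 < N.r

def Shrinks (N' N : PNode.{u, v} X) : Prop :=
  N'.A ⊆ N.A ∧ closedBall N'.c N'.r ⊆ closedBall N.c N.r ∧ N'.r ≤ N.r

def SepG (G : Set (X × X)) (N M : PNode.{u, v} X) : Prop :=
  ∀ y z : X, y ∈ closedBall N.c N.r → z ∈ closedBall M.c M.r →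
    (y, z) ∉ G ∧ (z, y) ∉ G ∧ y ≠ z

lemma Shrinks.refl (N : PNode.{u, v} X) : Shrinks N N :=
  ⟨subset_rfl, subset_rfl, le_rfl⟩

lemma Shrinks.trans {N'' N' N : PNode.{u, v} X} (h1 : Shrinks N'' N') (h2 : Shrinks N' N) :
    Shrinks N'' N :=
  ⟨h1.1.trans h2.1, h1.2.1.trans h2.2.1, h1.2.2.trans h2.2.2⟩

lemma SepG.mono {G : Set (X × X)} {N' N M' M : PNode.{u, v} X}
    (hN : Shrinks N' N) (hM : Shrinks M' M) (h : SepG G N M) : SepG G N' M' :=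
  fun y z hy hz => h y z (hN.2.1 hy) (hM.2.1 hz)

lemma sep_pair [SecondCountableTopology X]
    (hchain : ∀ ξ ζ : Ordinal.{v}, ξ < ζ → ζ < (Cardinal.aleph 1).ord →
      le (x ξ) (x ζ) ∧ ¬ le (x ζ) (x ξ))
    {G : Set (X × X)} (hGc : IsClosed G) (hGle : ∀ p ∈ G, le p.1 p.2)
    {N M : PNode.{u, v} X} (hN : NodeOK x N) (hM : NodeOK x M) {ε : ℝ} (hε : 0 < ε) :
    ∃ N' M' : PNode.{u, v} X, Shrinks N' N ∧ Shrinks M' M ∧ NodeOK x N' ∧ NodeOK x M' ∧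
      N'.r ≤ ε ∧ M'.r ≤ ε ∧ SepG G N' M' := by
  obtain ⟨A', hA'sub, hA'u, hA'cond⟩ := cond_trim x hN.2.1
  obtain ⟨B', hB'sub, hB'u, hB'cond⟩ := cond_trim x hM.2.1
  obtain ⟨ξ, hξ, ζ, hζ, hne, hG1, hG2⟩ :=
    claim2 x le hchain (hA'sub.trans hN.1) (hB'sub.trans hM.1) hA'u hB'u hGc hGle
  have hab : x ξ ≠ x ζ := by
    intro hEq
    rcases hne.lt_or_gt with hlt | hlt
    · have h1 := hchain ξ ζ hlt ((hB'sub.trans hM.1) hζ)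
      rw [hEq] at h1; exact h1.2 h1.1
    · have h1 := hchain ζ ξ hlt ((hA'sub.trans hN.1) hξ)
      rw [hEq] at h1; exact h1.2 h1.1
  obtain ⟨δ1, hδ1, hball1⟩ := Metric.isOpen_iff.mp hGc.isOpen_compl (x ξ, x ζ) hG1
  obtain ⟨δ2, hδ2, hball2⟩ := Metric.isOpen_iff.mp hGc.isOpen_compl (x ζ, x ξ) hG2
  have haN : x ξ ∈ ball N.c N.r := hN.2.2.1 ξ (hA'sub hξ)
  have hbM : x ζ ∈ ball M.c M.r := hM.2.2.1 ζ (hB'sub hζ)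
  obtain ⟨δ3, hδ3, hball3⟩ := Metric.isOpen_iff.mp Metric.isOpen_ball _ haN
  obtain ⟨δ4, hδ4, hball4⟩ := Metric.isOpen_iff.mp Metric.isOpen_ball _ hbM
  have hdab : 0 < dist (x ξ) (x ζ) := dist_pos.mpr hab
  set δ : ℝ := min (min (min (δ1 / 2) (δ2 / 2)) (min (δ3 / 2) (δ4 / 2)))
      (min (min (dist (x ξ) (x ζ) / 3) ε) (min N.r M.r)) with hδdef
  have hδpos : 0 < δ := by
    have := hN.2.2.2; have := hM.2.2.2; positivity
  have hδ1' : δ < δ1 :=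
    lt_of_le_of_lt ((min_le_left _ _).trans ((min_le_left _ _).trans (min_le_left _ _)))
      (half_lt_self hδ1)
  have hδ2' : δ < δ2 :=
    lt_of_le_of_lt ((min_le_left _ _).trans ((min_le_left _ _).trans (min_le_right _ _)))
      (half_lt_self hδ2)
  have hδ3' : δ < δ3 :=
    lt_of_le_of_lt ((min_le_left _ _).trans ((min_le_right _ _).trans (min_le_left _ _)))
      (half_lt_self hδ3)
  have hδ4' : δ < δ4 :=
    lt_of_le_of_lt ((min_le_left _ _).trans ((min_le_right _ _).trans (min_le_right _ _)))
      (half_lt_self hδ4)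
  have hδd : δ ≤ dist (x ξ) (x ζ) / 3 :=
    (min_le_right _ _).trans ((min_le_left _ _).trans (min_le_left _ _))
  have hδε : δ ≤ ε := (min_le_right _ _).trans ((min_le_left _ _).trans (min_le_right _ _))
  have hδN : δ ≤ N.r := (min_le_right _ _).trans ((min_le_right _ _).trans (min_le_left _ _))
  have hδM : δ ≤ M.r := (min_le_right _ _).trans ((min_le_right _ _).trans (min_le_right _ _))
  refine ⟨⟨N.A ∩ x ⁻¹' (ball (x ξ) δ), x ξ, δ⟩, ⟨M.A ∩ x ⁻¹' (ball (x ζ) δ), x ζ, δ⟩,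
    ?_, ?_, ?_, ?_, hδε, hδε, ?_⟩
  · exact ⟨inter_subset_left, (closedBall_subset_ball hδ3').trans
      (hball3.trans ball_subset_closedBall), hδN⟩
  · exact ⟨inter_subset_left, (closedBall_subset_ball hδ4').trans
      (hball4.trans ball_subset_closedBall), hδM⟩
  · exact ⟨inter_subset_left.trans hN.1, hA'cond ξ hξ _
      Metric.isOpen_ball (Metric.mem_ball_self hδpos), fun η hη => hη.2, hδpos⟩
  · exact ⟨inter_subset_left.trans hM.1, hB'cond ζ hζ _
      Metric.isOpen_ball (Metric.mem_ball_self hδpos), fun η hη => hη.2, hδpos⟩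
  · intro y z hy hz
    simp only [Metric.mem_closedBall] at hy hz
    refine ⟨?_, ?_, ?_⟩
    · intro hmem
      refine (hball1 ?_) hmem
      rw [Metric.mem_ball, Prod.dist_eq]
      exact max_lt (lt_of_le_of_lt hy hδ1') (lt_of_le_of_lt hz hδ1')
    · intro hmem
      refine (hball2 ?_) hmem
      rw [Metric.mem_ball, Prod.dist_eq]
      exact max_lt (lt_of_le_of_lt hz hδ2') (lt_of_le_of_lt hy hδ2')
    · intro hEq
      have h1 : dist (x ξ) (x ζ) ≤ dist (x ξ) y + dist y (x ζ) := dist_triangle _ _ _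
      have h2 : dist (x ξ) y ≤ δ := by rw [dist_comm]; exact hy
      have h3 : dist y (x ζ) ≤ δ := by rw [hEq]; exact hz
      linarith

lemma refine_list [SecondCountableTopology X] {ι : Type} [DecidableEq ι]
    (hchain : ∀ ξ ζ : Ordinal.{v}, ξ < ζ → ζ < (Cardinal.aleph 1).ord →
      le (x ξ) (x ζ) ∧ ¬ le (x ζ) (x ξ))
    {G : Set (X × X)} (hGc : IsClosed G) (hGle : ∀ p ∈ G, le p.1 p.2)
    {ε : ℝ} (hε : 0 < ε) (L : List (ι × ι)) :
    ∀ (D : ι → PNode.{u, v} X), (∀ i, NodeOK x (D i)) →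
    ∃ D' : ι → PNode.{u, v} X, (∀ i, Shrinks (D' i) (D i)) ∧ (∀ i, NodeOK x (D' i)) ∧
      ∀ p ∈ L, p.1 ≠ p.2 →
        SepG G (D' p.1) (D' p.2) ∧ (D' p.1).r ≤ ε ∧ (D' p.2).r ≤ ε := by
  induction L with
  | nil =>
    intro D hD
    exact ⟨D, fun i => Shrinks.refl _, hD, fun p hp => absurd hp List.not_mem_nil⟩
  | cons q L ih =>
    intro D hD
    by_cases hq : q.1 = q.2
    · obtain ⟨D', h1, h2, h3⟩ := ih D hD
      refine ⟨D', h1, h2, fun p hp hpne => ?_⟩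
      rcases List.mem_cons.mp hp with rfl | hp'
      · exact absurd hq hpne
      · exact h3 p hp' hpne
    · obtain ⟨N', M', hsN, hsM, hokN, hokM, hrN, hrM, hsep⟩ :=
        sep_pair le x hchain hGc hGle (hD q.1) (hD q.2) hε
      set D1 : ι → PNode.{u, v} X :=
        Function.update (Function.update D q.1 N') q.2 M' with hD1
      have hD1q1 : D1 q.1 = N' := by
        rw [hD1, Function.update_of_ne hq, Function.update_self]
      have hD1q2 : D1 q.2 = M' := by
        rw [hD1, Function.update_self]
      have hD1s : ∀ i, Shrinks (D1 i) (D i) := by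
        intro i
        by_cases h1 : i = q.2
        · subst h1; rw [hD1q2]; exact hsM
        · by_cases h2 : i = q.1
          · subst h2; rw [hD1q1]; exact hsN
          · rw [hD1, Function.update_of_ne h1, Function.update_of_ne h2]
            exact Shrinks.refl _
      have hD1ok : ∀ i, NodeOK x (D1 i) := by
        intro i
        by_cases h1 : i = q.2
        · subst h1; rw [hD1q2]; exact hokM
        · by_cases h2 : i = q.1
          · subst h2; rw [hD1q1]; exact hokN
          · rw [hD1, Function.update_of_ne h1, Function.update_of_ne h2]
            exact hD i
      obtain ⟨D', h1, h2, h3⟩ := ih D1 hD1ok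
      refine ⟨D', fun i => Shrinks.trans (h1 i) (hD1s i), h2, fun p hp hpne => ?_⟩
      rcases List.mem_cons.mp hp with rfl | hp'
      · refine ⟨SepG.mono (hD1q1 ▸ h1 p.1) (hD1q2 ▸ h1 p.2) hsep, ?_, ?_⟩
        · exact le_trans (h1 p.1).2.2 (by rw [hD1q1]; exact hrN)
        · exact le_trans (h1 p.2).2.2 (by rw [hD1q2]; exact hrM)
      · exact h3 p hp' hpne

structure Level (x : Ordinal.{v} → X) (F : ℕ → Set (X × X)) (n : ℕ) :
    Type (max u (v + 1)) where
  nd : (Fin n → Bool) → PNode.{u, v} X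
  ok : ∀ s, NodeOK x (nd s)
  sep : ∀ s t, s ≠ t → SepG (⋃ i ∈ Finset.range n, F i) (nd s) (nd t)
  small : ∀ s, (nd s).r ≤ (1 / 2 : ℝ) ^ n

lemma exists_level0 [SecondCountableTopology X] (F : ℕ → Set (X × X)) :
    Nonempty (Level x F 0) := by
  obtain ⟨B, hBsub, hBu, hcond⟩ := cond_trim x (uncountable_Iio_omega1.{v})
  have hBne : B.Nonempty := by
    rcases B.eq_empty_or_nonempty with rfl | h
    · exact absurd countable_empty hBu
    · exact h
  obtain ⟨ξ, hξ⟩ := hBne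
  refine ⟨⟨fun _ => ⟨Set.Iio (Cardinal.aleph 1).ord ∩ x ⁻¹' (ball (x ξ) (1/2)),
    x ξ, 1/2⟩, ?_, ?_, ?_⟩⟩
  · intro s
    exact ⟨inter_subset_left, hcond ξ hξ _ isOpen_ball (mem_ball_self (by norm_num)),
      fun η hη => hη.2, by norm_num⟩
  · intro s t hst
    exact absurd (funext fun i => i.elim0) hst
  · intro s
    norm_num

lemma level_step [SecondCountableTopology X]
    (hchain : ∀ ξ ζ : Ordinal.{v}, ξ < ζ → ζ < (Cardinal.aleph 1).ord →
      le (x ξ) (x ζ) ∧ ¬ le (x ζ) (x ξ))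
    (F : ℕ → Set (X × X)) (hFc : ∀ n, IsClosed (F n))
    (hFle : ∀ n, ∀ p ∈ F n, le p.1 p.2) {n : ℕ} (L : Level x F n) :
    ∃ L' : Level x F (n + 1),
      ∀ s : Fin (n + 1) → Bool, Shrinks (L'.nd s) (L.nd fun i => s i.castSucc) := by
  set G : Set (X × X) := ⋃ i ∈ Finset.range (n + 1), F i with hG
  have hGc : IsClosed G := by
    apply Set.Finite.isClosed_biUnion (Finset.finite_toSet _)
    exact fun i _ => hFc i
  have hGle : ∀ p ∈ G, le p.1 p.2 := by
    intro p hp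
    obtain ⟨i, -, hpi⟩ := mem_iUnion₂.mp hp
    exact hFle i p hpi
  set D : (Fin (n + 1) → Bool) → PNode.{u, v} X :=
    fun s => L.nd fun i => s i.castSucc with hD
  have hDok : ∀ s, NodeOK x (D s) := fun s => L.ok _
  have hεpos : (0 : ℝ) < (1 / 2 : ℝ) ^ (n + 1) := by positivity
  obtain ⟨D', hs, hok, hsep⟩ := refine_list le x hchain hGc hGle hεpos
    (Finset.univ : Finset ((Fin (n + 1) → Bool) × (Fin (n + 1) → Bool))).toList D hDok
  have hmem : ∀ p : (Fin (n + 1) → Bool) × (Fin (n + 1) → Bool),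
      p ∈ (Finset.univ : Finset ((Fin (n + 1) → Bool) × (Fin (n + 1) → Bool))).toList :=
    fun p => Finset.mem_toList.mpr (Finset.mem_univ p)
  refine ⟨⟨D', hok, ?_, ?_⟩, fun s => hs s⟩
  · intro s t hst
    exact (hsep (s, t) (hmem (s, t)) hst).1
  · intro s
    have hne : s ≠ fun i => !(s i) := by
      intro hEq
      have := congrFun hEq ⟨0, Nat.succ_pos n⟩
      simp at this
    exact (hsep (s, fun i => !(s i)) (hmem _) hne).2.1

lemma exists_tower [SecondCountableTopology X]
    (hchain : ∀ ξ ζ : Ordinal.{v}, ξ < ζ → ζ < (Cardinal.aleph 1).ord →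
      le (x ξ) (x ζ) ∧ ¬ le (x ζ) (x ξ))
    (F : ℕ → Set (X × X)) (hFc : ∀ n, IsClosed (F n))
    (hFle : ∀ n, ∀ p ∈ F n, le p.1 p.2) :
    ∃ Lv : ∀ n, Level x F n, ∀ n (s : Fin (n + 1) → Bool),
      Shrinks ((Lv (n + 1)).nd s) ((Lv n).nd fun i => s i.castSucc) := by
  obtain ⟨L0⟩ := exists_level0 x F
  choose stepf stepspec using fun n (L : Level x F n) => level_step le x hchain F hFc hFle L
  refine ⟨fun n => Nat.rec L0 stepf n, fun n s => ?_⟩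
  exact stepspec n (Nat.rec L0 stepf n) s

lemma main_metric [CompleteSpace X] [SecondCountableTopology X]
    (F : ℕ → Set (X × X)) (hFc : ∀ n, IsClosed (F n))
    (hle_eq : {p : X × X | le p.1 p.2} = ⋃ n, F n)
    (hchain : ∀ ξ ζ : Ordinal.{v}, ξ < ζ → ζ < (Cardinal.aleph 1).ord →
      le (x ξ) (x ζ) ∧ ¬ le (x ζ) (x ξ)) :
    ∃ P : Set X, Perfect P ∧ P.Nonempty ∧
      ∀ a ∈ P, ∀ b ∈ P, a ≠ b → ¬ le a b ∧ ¬ le b a := by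
  have hFle : ∀ n, ∀ p ∈ F n, le p.1 p.2 := by
    intro n p hp
    have h1 : p ∈ ⋃ n, F n := mem_iUnion.mpr ⟨n, hp⟩
    rw [← hle_eq] at h1
    exact h1
  obtain ⟨Lv, hLv⟩ := exists_tower le x hchain F hFc hFle
  set cseq : (ℕ → Bool) → ℕ → X := fun σ n => ((Lv n).nd fun i : Fin n => σ i).c with hcseq
  set rad : (ℕ → Bool) → ℕ → ℝ := fun σ n => ((Lv n).nd fun i : Fin n => σ i).r with hrad
  have hradpos : ∀ σ n, 0 < rad σ n := fun σ n => ((Lv n).ok _).2.2.2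
  have hradle : ∀ σ n, rad σ n ≤ (1 / 2 : ℝ) ^ n := fun σ n => (Lv n).small _
  have hshr : ∀ (σ : ℕ → Bool) (n : ℕ),
      Shrinks ((Lv (n + 1)).nd fun i : Fin (n + 1) => σ i)
        ((Lv n).nd fun i : Fin n => σ i) := by
    intro σ n
    have h1 := hLv n (fun i : Fin (n + 1) => σ i)
    have h2 : (fun i : Fin n => σ ((i.castSucc : Fin (n + 1)) : ℕ)) =
        fun i : Fin n => σ i := funext fun i => by simp
    rwa [h2] at h1
  have hball : ∀ (σ : ℕ → Bool) (n : ℕ),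
      closedBall (cseq σ (n + 1)) (rad σ (n + 1)) ⊆ closedBall (cseq σ n) (rad σ n) :=
    fun σ n => (hshr σ n).2.1
  have hcmem : ∀ (σ : ℕ → Bool) (n : ℕ), cseq σ n ∈ closedBall (cseq σ n) (rad σ n) :=
    fun σ n => mem_closedBall_self (le_of_lt (hradpos σ n))
  have hmono : ∀ (σ : ℕ → Bool) (m n : ℕ), m ≤ n →
      closedBall (cseq σ n) (rad σ n) ⊆ closedBall (cseq σ m) (rad σ m) := by
    intro σ m n hmn
    induction n, hmn using Nat.le_induction with
    | base => exact subset_rfl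
    | succ n hmn ih => exact (hball σ n).trans ih
  have hdist : ∀ (σ : ℕ → Bool) (n : ℕ), dist (cseq σ n) (cseq σ (n + 1)) ≤ 1 * (1 / 2) ^ n := by
    intro σ n
    rw [one_mul, dist_comm]
    have h1 : cseq σ (n + 1) ∈ closedBall (cseq σ n) (rad σ n) := hball σ n (hcmem σ (n + 1))
    exact (mem_closedBall.mp h1).trans (hradle σ n)
  have hcauchy : ∀ σ : ℕ → Bool, CauchySeq (cseq σ) := fun σ =>
    cauchySeq_of_le_geometric (1 / 2) 1 (by norm_num) (hdist σ)
  choose g hg using fun σ => cauchySeq_tendsto_of_complete (hcauchy σ)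
  have hglim : ∀ (σ : ℕ → Bool) (n : ℕ), g σ ∈ closedBall (cseq σ n) (rad σ n) := by
    intro σ n
    refine isClosed_closedBall.mem_of_tendsto (hg σ) ?_
    filter_upwards [Filter.eventually_ge_atTop n] with m hm
    exact hmono σ n m hm (hcmem σ m)
  have hkey : ∀ σ τ : ℕ → Bool, ∀ k, σ k ≠ τ k → ∀ n, k < n →
      ((g σ, g τ) ∉ ⋃ i ∈ Finset.range n, F i) ∧ g σ ≠ g τ := by
    intro σ τ k hk n hkn
    have hne : (fun i : Fin n => σ i) ≠ (fun i : Fin n => τ i) := by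
      intro hEq
      exact hk (by simpa using congrFun hEq ⟨k, hkn⟩)
    have h1 := (Lv n).sep _ _ hne (g σ) (g τ) (hglim σ n) (hglim τ n)
    exact ⟨h1.1, h1.2.2⟩
  -- continuity-type estimate
  have hclose : ∀ σ τ : ℕ → Bool, ∀ n, (∀ i < n, τ i = σ i) →
      dist (g τ) (g σ) ≤ 2 * (1 / 2 : ℝ) ^ n := by
    intro σ τ n hagree
    have heq : (fun i : Fin n => τ i) = fun i : Fin n => σ i :=
      funext fun i => hagree i i.isLt
    have heq2 : ((Lv n).nd fun i : Fin n => τ i) = ((Lv n).nd fun i : Fin n => σ i) := by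
      rw [heq]
    have h1 : g τ ∈ closedBall (cseq σ n) (rad σ n) := by
      show g τ ∈ closedBall ((Lv n).nd fun i : Fin n => σ i).c ((Lv n).nd fun i : Fin n => σ i).r
      rw [← heq2]
      exact hglim τ n
    have h2 := hglim σ n
    have h3 := (mem_closedBall.mp h1).trans (hradle σ n)
    have h4 := (mem_closedBall.mp h2).trans (hradle σ n)
    calc dist (g τ) (g σ) ≤ dist (g τ) (cseq σ n) + dist (g σ) (cseq σ n) :=
          dist_triangle_right _ _ _
      _ ≤ 2 * (1 / 2 : ℝ) ^ n := by linarith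
  have hgcont : Continuous g := by
    rw [continuous_iff_continuousAt]
    intro σ
    rw [ContinuousAt, Metric.tendsto_nhds]
    intro ε hε
    obtain ⟨n, hn⟩ : ∃ n : ℕ, (1 / 2 : ℝ) ^ n < ε / 3 :=
      exists_pow_lt_of_lt_one (by positivity) (by norm_num)
    have hUopen : IsOpen {τ : ℕ → Bool | ∀ i < n, τ i = σ i} := by
      have hEq : {τ : ℕ → Bool | ∀ i < n, τ i = σ i} =
          ⋂ i ∈ Finset.range n, (fun τ : ℕ → Bool => τ i) ⁻¹' {σ i} := by
        ext τ; simp [Finset.mem_range]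
      rw [hEq]
      exact isOpen_biInter_finset fun i _ => (continuous_apply i).isOpen_preimage _ trivial
    have hmemU : σ ∈ {τ : ℕ → Bool | ∀ i < n, τ i = σ i} := fun i _ => rfl
    filter_upwards [hUopen.mem_nhds hmemU] with τ hτ
    have := hclose σ τ n hτ
    calc dist (g τ) (g σ) ≤ 2 * (1 / 2 : ℝ) ^ n := this
      _ < ε := by linarith
  -- the perfect set
  refine ⟨Set.range g, ⟨(isCompact_range hgcont).isClosed, ?_⟩, ⟨g (fun _ => false),
    mem_range_self _⟩, ?_⟩
  · -- Preperfect
    rintro a ⟨σ, rfl⟩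
    rw [accPt_iff_nhds]
    intro U hU
    obtain ⟨ε, hε, hballU⟩ := Metric.mem_nhds_iff.mp hU
    obtain ⟨n, hn⟩ : ∃ n : ℕ, (1 / 2 : ℝ) ^ n < ε / 3 :=
      exists_pow_lt_of_lt_one (by positivity) (by norm_num)
    set τ : ℕ → Bool := Function.update σ n (!(σ n)) with hτdef
    have hτn : τ n ≠ σ n := by
      rw [hτdef, Function.update_self]
      exact Bool.not_ne_self (σ n)
    have hagree : ∀ i < n, τ i = σ i := by
      intro i hi
      rw [hτdef, Function.update_of_ne (Nat.ne_of_lt hi)]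
    have hd := hclose σ τ n hagree
    have hne : g τ ≠ g σ := (hkey τ σ n hτn (n + 1) (Nat.lt_succ_self n)).2
    refine ⟨g τ, ⟨hballU ?_, mem_range_self _⟩, hne⟩
    rw [Metric.mem_ball]
    calc dist (g τ) (g σ) ≤ 2 * (1 / 2 : ℝ) ^ n := hd
      _ < ε := by linarith
  · -- pairwise incomparable
    rintro a ⟨σ, rfl⟩ b ⟨τ, rfl⟩ hab
    have hστ : σ ≠ τ := fun h => hab (by rw [h])
    obtain ⟨k, hk⟩ := Function.ne_iff.mp hστ
    constructor
    · intro hle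
      have h1 : (g σ, g τ) ∈ ⋃ n, F n := by
        rw [← hle_eq]; exact hle
      obtain ⟨i, hi⟩ := mem_iUnion.mp h1
      refine (hkey σ τ k hk (max i k + 1) (by omega)).1 ?_
      exact mem_biUnion (Finset.mem_range.mpr (by omega)) hi
    · intro hle
      have h1 : (g τ, g σ) ∈ ⋃ n, F n := by
        rw [← hle_eq]; exact hle
      obtain ⟨i, hi⟩ := mem_iUnion.mp h1
      refine (hkey τ σ k (Ne.symm hk) (max i k + 1) (by omega)).1 ?_
      exact mem_biUnion (Finset.mem_range.mpr (by omega)) hi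


end MetricPart

end OmegaOneChain

/-- If an F_σ quasi-order on a Polish space contains a strictly increasing
ω₁-chain, then there is a perfect set of pairwise incomparable elements. -/
theorem fsigma_quasiorder_omega1_chain_perfect_antichain
    {X : Type*} [TopologicalSpace X] [PolishSpace X]
    (le : X → X → Prop)
    (hrefl : ∀ x, le x x)
    (htrans : ∀ x y z, le x y → le y z → le x z)
    (hFσ : ∃ F : ℕ → Set (X × X), (∀ n, IsClosed (F n)) ∧
      {p : X × X | le p.1 p.2} = ⋃ n, F n)
    (x : Ordinal → X)
    (hchain : ∀ ξ ζ : Ordinal, ξ < ζ → ζ < (Cardinal.aleph 1).ord →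
      le (x ξ) (x ζ) ∧ ¬ le (x ζ) (x ξ)) :
    ∃ P : Set X, Perfect P ∧ P.Nonempty ∧
      ∀ a ∈ P, ∀ b ∈ P, a ≠ b → ¬ le a b ∧ ¬ le b a := by
  letI := TopologicalSpace.upgradeIsCompletelyMetrizable X
  obtain ⟨F, hFc, hle_eq⟩ := hFσ
  exact main_metric le x F hFc hle_eq hchain
end

section
/- Let X be a Polish space and ≤ an F_σ thin quasi-order on X, where thin means X contains no perfect set of pairwise incomparable elements. Then (X,≤) contains no ω₁-chain, i.e., there is no sequence (x_ξ)_{ξ<ω₁} that is strictly increasing (x_ξ < x_ζ for ξ < ζ) or strictly decreasing with respect to ≤. -/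
lemma nat_rec_exists {T : ℕ → Sort*} {R : ∀ m, T m → T (m+1) → Prop}
    (h0 : Nonempty (T 0)) (hstep : ∀ m (t : T m), ∃ t' : T (m+1), R m t t') :
    ∃ G : ∀ m, T m, ∀ m, R m (G m) (G (m+1)) := by
  choose f hf using hstep
  exact ⟨fun m => Nat.rec h0.some f m, fun m => hf m _⟩


open Set Cardinal Filter Topology

lemma ord_uncountable : ¬ (Set.Iio ((Cardinal.aleph 1).ord) : Set Ordinal).Countable := by
  rw [Cardinal.countable_iff_lt_aleph_one, Ordinal.mk_Iio_ordinal, Cardinal.card_ord,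
    Cardinal.lift_lt_aleph_one]
  exact lt_irrefl _

lemma ord_small {o : Ordinal} (h : o < (Cardinal.aleph 1).ord) :
    (Set.Iio o : Set Ordinal).Countable := by
  rw [Cardinal.countable_iff_lt_aleph_one, Ordinal.mk_Iio_ordinal, Cardinal.lift_lt_aleph_one]
  exact Cardinal.lt_ord.1 h

lemma ord_pick {S C : Set Ordinal}
    (hS : ¬ S.Countable) (hC : C.Countable) {ξ₀ : Ordinal}
    (hξ₀ : ξ₀ < (Cardinal.aleph 1).ord) :
    ∃ η ∈ S, η ∉ C ∧ ξ₀ < η := by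
  have hlim : Order.IsSuccLimit ((Cardinal.aleph 1).ord) :=
    Cardinal.isSuccLimit_ord (Cardinal.aleph0_le_aleph 1)
  have hsucc : ξ₀ + 1 < (Cardinal.aleph 1).ord := by
    rw [Ordinal.add_one_eq_succ]
    exact hlim.succ_lt hξ₀
  have hcnt : (C ∪ Set.Iio (ξ₀ + 1)).Countable := hC.union (ord_small hsucc)
  by_contra h
  push_neg at h
  apply hS
  apply hcnt.mono
  intro η hη
  by_cases hη1 : η ∈ C
  · exact Or.inl hη1
  · refine Or.inr ?_
    have := h η hη hη1
    rw [Set.mem_Iio, Ordinal.add_one_eq_succ, Order.lt_succ_iff]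
    exact this

lemma aux_chain {X : Type*} [MetricSpace X] [CompleteSpace X]
    [SecondCountableTopology X]
    (le : X → X → Prop) (hrefl : ∀ x, le x x)
    (F : ℕ → Set (X × X)) (hFc : ∀ n, IsClosed (F n))
    (hle : ∀ a b, le a b ↔ ∃ n, (a, b) ∈ F n)
    (x : Ordinal → X)
    (hchain : ∀ ξ ζ : Ordinal, ξ < ζ → ζ < (Cardinal.aleph 1).ord →
      le (x ξ) (x ζ) ∧ ¬ le (x ζ) (x ξ)) :
    ∃ P : Set X, Perfect P ∧ P.Nonempty ∧
      ∀ a ∈ P, ∀ b ∈ P, a ≠ b → ¬ le a b ∧ ¬ le b a := by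
  classical
  obtain ⟨b, hbc, hbne, hbasis⟩ := TopologicalSpace.exists_countable_basis X
  set ω₁ := (Cardinal.aleph 1).ord with hω₁
  have hω₁pos : (0 : Ordinal) < ω₁ :=
    (Cardinal.isSuccLimit_ord (Cardinal.aleph0_le_aleph 1)).pos
  set I : Set X → Set Ordinal := fun U => {ξ | ξ < ω₁ ∧ x ξ ∈ U} with hI
  set bad : Set (Set X) := {U | U ∈ b ∧ (I U).Countable} with hbad
  have hbadc : bad.Countable := hbc.mono fun U hU => hU.1
  set K : Set X := (⋃ U ∈ bad, U)ᶜ with hK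
  have hKclosed : IsClosed K := by
    rw [hK]
    exact (isOpen_biUnion fun U hU => hbasis.isOpen hU.1).isClosed_compl
  set J : Set Ordinal := ⋃ U ∈ bad, I U with hJ
  have hJc : J.Countable := hbadc.biUnion fun U hU => hU.2
  have hmemK : ∀ ξ, ξ < ω₁ → ξ ∉ J → x ξ ∈ K := by
    intro ξ hξ hξJ
    rw [hK, Set.mem_compl_iff]
    intro hmem
    rw [Set.mem_iUnion₂] at hmem
    obtain ⟨U, hU, hxU⟩ := hmem
    exact hξJ (Set.mem_iUnion₂.2 ⟨U, hU, ⟨hξ, hxU⟩⟩)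
  have hKdense : ∀ U : Set X, IsOpen U → (U ∩ K).Nonempty → ¬ (I U).Countable := by
    rintro U hUopen ⟨y, hyU, hyK⟩
    obtain ⟨W, hWb, hyW, hWU⟩ := hbasis.exists_subset_of_mem_open hyU hUopen
    have hWnotbad : W ∉ bad := by
      intro hWbad
      exact hyK (Set.mem_iUnion₂.2 ⟨W, hWbad, hyW⟩)
    intro hcnt
    have hsub : I W ⊆ I U := fun ξ hξ => ⟨hξ.1, hWU hξ.2⟩
    exact hWnotbad ⟨hWb, hcnt.mono hsub⟩
  have hKne : K.Nonempty := by
    obtain ⟨η, hη, hηJ, -⟩ := ord_pick (S := Set.Iio ω₁) ord_uncountable hJc hω₁pos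
    exact ⟨x η, hmemK η hη hηJ⟩
  have hIsub : ∀ U : Set X, I U ⊆ Set.Iio ω₁ := fun U ξ hξ => hξ.1
  -- separation from the chain
  have Hsep : ∀ U V : Set X, IsOpen U → IsOpen V → (U ∩ K).Nonempty →
      (V ∩ K).Nonempty → ∀ n, ∃ a ∈ U ∩ K, ∃ c ∈ V ∩ K, (a, c) ∉ F n := by
    intro U V hUo hVo hUne hVne n
    obtain ⟨ξ, hξV, hξJ, -⟩ := ord_pick (hKdense V hVo hVne) hJc hω₁pos
    obtain ⟨η, hηU, hηJ, hξη⟩ := ord_pick (hKdense U hUo hUne) hJc (hIsub V hξV)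
    refine ⟨x η, ⟨hηU.2, hmemK η hηU.1 hηJ⟩, x ξ, ⟨hξV.2, hmemK ξ hξV.1 hξJ⟩, ?_⟩
    intro hmem
    exact (hchain ξ η hξη hηU.1).2 ((hle _ _).2 ⟨n, hmem⟩)
  have Lsh : ∀ U V : Set X, IsOpen U → IsOpen V → (U ∩ K).Nonempty →
      (V ∩ K).Nonempty → ∀ n, ∃ U' V' : Set X, IsOpen U' ∧ IsOpen V' ∧ U' ⊆ U ∧ V' ⊆ V ∧
      (U' ∩ K).Nonempty ∧ (V' ∩ K).Nonempty ∧
      ∀ a ∈ U' ∩ K, ∀ c ∈ V' ∩ K, (a, c) ∉ F n ∧ (c, a) ∉ F n := by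
    intro U V hUo hVo hUne hVne n
    obtain ⟨a, haUK, c, hcVK, hac⟩ := Hsep U V hUo hVo hUne hVne n
    obtain ⟨u₁, v₁, hu₁, hv₁, hau₁, hcv₁, huv₁⟩ :=
      isOpen_prod_iff.1 (hFc n).isOpen_compl a c hac
    have hU₂o : IsOpen (U ∩ u₁) := hUo.inter hu₁
    have hV₂o : IsOpen (V ∩ v₁) := hVo.inter hv₁
    have hU₂ne : ((U ∩ u₁) ∩ K).Nonempty := ⟨a, ⟨haUK.1, hau₁⟩, haUK.2⟩
    have hV₂ne : ((V ∩ v₁) ∩ K).Nonempty := ⟨c, ⟨hcVK.1, hcv₁⟩, hcVK.2⟩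
    obtain ⟨c', hc'VK, a', ha'UK, hca⟩ := Hsep (V ∩ v₁) (U ∩ u₁) hV₂o hU₂o hV₂ne hU₂ne n
    obtain ⟨v₃, u₃, hv₃, hu₃, hcv₃, hau₃, hvu₃⟩ :=
      isOpen_prod_iff.1 (hFc n).isOpen_compl c' a' hca
    refine ⟨(U ∩ u₁) ∩ u₃, (V ∩ v₁) ∩ v₃, hU₂o.inter hu₃, hV₂o.inter hv₃,
      fun z hz => hz.1.1, fun z hz => hz.1.1,
      ⟨a', ⟨ha'UK.1, hau₃⟩, ha'UK.2⟩, ⟨c', ⟨hc'VK.1, hcv₃⟩, hc'VK.2⟩, ?_⟩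
    intro p hp q hq
    constructor
    · exact huv₁ (Set.mk_mem_prod hp.1.1.2 hq.1.1.2)
    · exact hvu₃ (Set.mk_mem_prod hq.1.2 hp.1.2)
  have Lshn : ∀ N : ℕ, ∀ U V : Set X, IsOpen U → IsOpen V → (U ∩ K).Nonempty →
      (V ∩ K).Nonempty → ∃ U' V' : Set X, IsOpen U' ∧ IsOpen V' ∧ U' ⊆ U ∧ V' ⊆ V ∧
      (U' ∩ K).Nonempty ∧ (V' ∩ K).Nonempty ∧
      ∀ n ≤ N, ∀ a ∈ U' ∩ K, ∀ c ∈ V' ∩ K, (a, c) ∉ F n ∧ (c, a) ∉ F n := by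
    intro N
    induction N with
    | zero =>
      intro U V hUo hVo hUne hVne
      obtain ⟨U', V', h1, h2, h3, h4, h5, h6, h7⟩ := Lsh U V hUo hVo hUne hVne 0
      exact ⟨U', V', h1, h2, h3, h4, h5, h6, fun n hn => by
        interval_cases n
        exact h7⟩
    | succ N ih =>
      intro U V hUo hVo hUne hVne
      obtain ⟨U₁, V₁, h1, h2, h3, h4, h5, h6, h7⟩ := ih U V hUo hVo hUne hVne
      obtain ⟨U', V', g1, g2, g3, g4, g5, g6, g7⟩ := Lsh U₁ V₁ h1 h2 h5 h6 (N + 1)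
      refine ⟨U', V', g1, g2, g3.trans h3, g4.trans h4, g5, g6, ?_⟩
      intro n hn a ha c hc
      rcases Nat.lt_or_ge n (N + 1) with hlt | hge
      · exact h7 n (Nat.lt_succ_iff.1 hlt) a ⟨g3 ha.1, ha.2⟩ c ⟨g4 hc.1, hc.2⟩
      · have : n = N + 1 := le_antisymm hn hge
        subst this
        exact g7 a ha c hc
  -- finite family shrink
  have Lfam : ∀ (ι : Type) (_ : DecidableEq ι) (N : ℕ) (Q : Finset (ι × ι))
      (g : ι → Set X), (∀ i, IsOpen (g i)) → (∀ i, (g i ∩ K).Nonempty) →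
      ∃ g' : ι → Set X, (∀ i, IsOpen (g' i)) ∧ (∀ i, g' i ⊆ g i) ∧
        (∀ i, (g' i ∩ K).Nonempty) ∧
        ∀ p ∈ Q, p.1 ≠ p.2 → ∀ n ≤ N, ∀ a ∈ g' p.1 ∩ K, ∀ c ∈ g' p.2 ∩ K,
          (a, c) ∉ F n := by
    intro ι instDec N Q
    induction Q using Finset.induction_on with
    | empty =>
      intro g hgo hgne
      exact ⟨g, hgo, fun i => subset_rfl, hgne, fun p hp => absurd hp (Finset.notMem_empty p)⟩
    | @insert p Q hpQ ih =>
      intro g hgo hgne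
      obtain ⟨g₁, hg₁o, hg₁sub, hg₁ne, hg₁⟩ := ih g hgo hgne
      by_cases hp : p.1 = p.2
      · refine ⟨g₁, hg₁o, hg₁sub, hg₁ne, ?_⟩
        intro q hq hq12
        rcases Finset.mem_insert.1 hq with rfl | hq
        · exact absurd hp hq12
        · exact hg₁ q hq hq12
      · obtain ⟨U', V', h1, h2, h3, h4, h5, h6, h7⟩ :=
          Lshn N (g₁ p.1) (g₁ p.2) (hg₁o p.1) (hg₁o p.2) (hg₁ne p.1) (hg₁ne p.2)
        set g₂ : ι → Set X :=
          fun i => if i = p.1 then U' else if i = p.2 then V' else g₁ i with hg₂def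
        have hsub2 : ∀ i, g₂ i ⊆ g₁ i := by
          intro i
          rw [hg₂def]
          dsimp only
          split_ifs with e1 e2
          · subst e1; exact h3
          · subst e2; exact h4
          · exact subset_rfl
        have hg₂o : ∀ i, IsOpen (g₂ i) := by
          intro i; rw [hg₂def]; dsimp only; split_ifs
          exacts [h1, h2, hg₁o i]
        have hg₂ne : ∀ i, (g₂ i ∩ K).Nonempty := by
          intro i; rw [hg₂def]; dsimp only; split_ifs
          exacts [h5, h6, hg₁ne i]
        have hg₂1 : g₂ p.1 = U' := by rw [hg₂def]; simp
        have hg₂2 : g₂ p.2 = V' := by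
          rw [hg₂def]; dsimp only
          rw [if_neg (Ne.symm hp), if_pos rfl]
        refine ⟨g₂, hg₂o, fun i => (hsub2 i).trans (hg₁sub i), hg₂ne, ?_⟩
        intro q hq hq12 n hn a ha c hc
        rcases Finset.mem_insert.1 hq with rfl | hq
        · rw [hg₂1] at ha; rw [hg₂2] at hc
          exact (h7 n hn a ha c hc).1
        · exact hg₁ q hq hq12 n hn a ⟨hsub2 q.1 ha.1, ha.2⟩ c ⟨hsub2 q.2 hc.1, hc.2⟩
  -- shrink an open set around a point of K to a small ball with closure inside
  have Lball : ∀ (W : Set X) (y : X) (δ : ℝ), 0 < δ → IsOpen W → y ∈ W ∩ K →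
      ∃ W' : Set X, IsOpen W' ∧ closure W' ⊆ W ∧ (W' ∩ K).Nonempty ∧
        ∀ a ∈ W', ∀ c ∈ W', dist a c ≤ δ := by
    intro W y δ hδ hWo hyW
    obtain ⟨ε, hε, hball⟩ := Metric.isOpen_iff.1 hWo y hyW.1
    set r : ℝ := min (ε / 2) (δ / 2) with hr
    have hr0 : 0 < r := lt_min (by linarith) (by linarith)
    refine ⟨Metric.ball y r, Metric.isOpen_ball, ?_, ⟨y, Metric.mem_ball_self hr0, hyW.2⟩, ?_⟩
    · refine (Metric.closure_ball_subset_closedBall).trans ?_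
      refine (Metric.closedBall_subset_ball ?_).trans hball
      have : r ≤ ε / 2 := min_le_left _ _
      linarith
    · intro a ha c hc
      have h1 : dist a y < r := Metric.mem_ball.1 ha
      have h2 : dist c y < r := Metric.mem_ball.1 hc
      have h3 : r ≤ δ / 2 := min_le_right _ _
      calc dist a c ≤ dist a y + dist y c := dist_triangle _ _ _
        _ ≤ r + r := by rw [dist_comm y c]; linarith
        _ ≤ δ := by linarith
  have Hbase : ∃ g : (Fin 0 → Bool) → Set X, (∀ s, IsOpen (g s)) ∧
      (∀ s, (g s ∩ K).Nonempty) ∧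
      (∀ s, ∀ a ∈ g s, ∀ c ∈ g s, dist a c ≤ (1 / 2 : ℝ) ^ (0 : ℕ)) := by
    obtain ⟨y, hy⟩ := hKne
    obtain ⟨W', h1, h2, h3, h4⟩ := Lball Set.univ y ((1 / 2 : ℝ) ^ (0 : ℕ))
      (by norm_num) isOpen_univ ⟨Set.mem_univ y, hy⟩
    exact ⟨fun _ => W', fun _ => h1, fun _ => h3, fun _ => h4⟩
  have Hstep : ∀ (m : ℕ) (g : (Fin m → Bool) → Set X), (∀ s, IsOpen (g s)) →
      (∀ s, (g s ∩ K).Nonempty) →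
      ∃ g' : (Fin (m + 1) → Bool) → Set X,
        (∀ t, IsOpen (g' t)) ∧ (∀ t, (g' t ∩ K).Nonempty) ∧
        (∀ t, closure (g' t) ⊆ g (fun i => t i.castSucc)) ∧
        (∀ t, ∀ a ∈ g' t, ∀ c ∈ g' t, dist a c ≤ (1 / 2 : ℝ) ^ (m + 1)) ∧
        (∀ s t, s ≠ t → ∀ n ≤ m, ∀ a ∈ g' s ∩ K, ∀ c ∈ g' t ∩ K, (a, c) ∉ F n) := by
    intro m g hgo hgne
    set g₀ : (Fin (m + 1) → Bool) → Set X := fun t => g (fun i => t i.castSucc) with hg₀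
    obtain ⟨g₁, hg₁o, hg₁sub, hg₁ne, hg₁⟩ :=
      Lfam (Fin (m + 1) → Bool) inferInstance m Finset.univ g₀
        (fun t => hgo _) (fun t => hgne _)
    have hpt : ∀ t, ∃ W' : Set X, IsOpen W' ∧ closure W' ⊆ g₁ t ∧ (W' ∩ K).Nonempty ∧
        ∀ a ∈ W', ∀ c ∈ W', dist a c ≤ (1 / 2 : ℝ) ^ (m + 1) := by
      intro t
      obtain ⟨y, hy⟩ := hg₁ne t
      exact Lball (g₁ t) y ((1 / 2 : ℝ) ^ (m + 1)) (by positivity) (hg₁o t) hy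
    choose g' hg'o hg'cl hg'ne hg'd using hpt
    refine ⟨g', hg'o, hg'ne, ?_, hg'd, ?_⟩
    · intro t
      exact (hg'cl t).trans (hg₁sub t)
    · intro s t hst n hn a ha c hc
      exact hg₁ (s, t) (Finset.mem_univ _) hst n hn a
        ⟨subset_closure.trans (hg'cl s) ha.1, ha.2⟩ c
        ⟨subset_closure.trans (hg'cl t) hc.1, hc.2⟩
  -- build the scheme by recursion
  have hscheme : ∃ G : ∀ m : ℕ,
      {g : (Fin m → Bool) → Set X // (∀ s, IsOpen (g s)) ∧ (∀ s, (g s ∩ K).Nonempty) ∧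
        (∀ s, ∀ a ∈ g s, ∀ c ∈ g s, dist a c ≤ (1 / 2 : ℝ) ^ m)},
      ∀ m : ℕ, (∀ t : Fin (m + 1) → Bool,
          closure ((G (m + 1)).1 t) ⊆ (G m).1 (fun i => t i.castSucc)) ∧
        (∀ s t : Fin (m + 1) → Bool, s ≠ t → ∀ n ≤ m,
          ∀ a ∈ (G (m + 1)).1 s ∩ K, ∀ c ∈ (G (m + 1)).1 t ∩ K, (a, c) ∉ F n) := by
    apply nat_rec_exists
      (T := fun m => {g : (Fin m → Bool) → Set X // (∀ s, IsOpen (g s)) ∧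
        (∀ s, (g s ∩ K).Nonempty) ∧
        (∀ s, ∀ a ∈ g s, ∀ c ∈ g s, dist a c ≤ (1 / 2 : ℝ) ^ m)})
      (R := fun m t t' =>
      (∀ u : Fin (m + 1) → Bool,
          closure (t'.1 u) ⊆ t.1 (fun i => u i.castSucc)) ∧
        (∀ s u : Fin (m + 1) → Bool, s ≠ u → ∀ n ≤ m,
          ∀ a ∈ t'.1 s ∩ K, ∀ c ∈ t'.1 u ∩ K, (a, c) ∉ F n))
    · obtain ⟨g, h1, h2, h3⟩ := Hbase
      exact ⟨⟨g, h1, h2, h3⟩⟩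
    · rintro m ⟨g, hgo, hgne, hgd⟩
      obtain ⟨g', h1, h2, h3, h4, h5⟩ := Hstep m g hgo hgne
      exact ⟨⟨g', h1, h2, h4⟩, h3, h5⟩
  obtain ⟨Gs, hGs⟩ := hscheme
  set G : ∀ m : ℕ, (Fin m → Bool) → Set X := fun m => (Gs m).1 with hG
  have hGne : ∀ m s, (G m s ∩ K).Nonempty := fun m => (Gs m).2.2.1
  have hGd : ∀ m s, ∀ a ∈ G m s, ∀ c ∈ G m s, dist a c ≤ (1 / 2 : ℝ) ^ m :=
    fun m => (Gs m).2.2.2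
  have hGnest : ∀ m (t : Fin (m + 1) → Bool),
      closure (G (m + 1) t) ⊆ G m (fun i => t i.castSucc) := fun m => (hGs m).1
  have hGpair : ∀ m (s t : Fin (m + 1) → Bool), s ≠ t → ∀ n ≤ m,
      ∀ a ∈ G (m + 1) s ∩ K, ∀ c ∈ G (m + 1) t ∩ K, (a, c) ∉ F n := fun m => (hGs m).2
  -- the limit construction
  set res : ∀ m : ℕ, (ℕ → Bool) → (Fin m → Bool) := fun m σ i => σ i with hres
  have hresparent : ∀ (m : ℕ) (σ : ℕ → Bool),
      (fun i : Fin m => (res (m + 1) σ) i.castSucc) = res m σ := by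
    intro m σ; funext i; simp [hres]
  have hnest' : ∀ (m : ℕ) (σ : ℕ → Bool),
      G (m + 1) (res (m + 1) σ) ⊆ G m (res m σ) := by
    intro m σ
    have := hGnest m (res (m + 1) σ)
    rw [hresparent] at this
    exact subset_closure.trans this
  have hmono : ∀ (m m' : ℕ), m ≤ m' → ∀ σ, G m' (res m' σ) ⊆ G m (res m σ) := by
    intro m m' hmm'
    induction m' , hmm' using Nat.le_induction with
    | base => intro σ; exact subset_rfl
    | succ m' hm ih => intro σ; exact (hnest' m' σ).trans (ih σ)
  choose y hy using hGne
  set pt : ℕ → (ℕ → Bool) → X := fun m σ => y m (res m σ) with hpt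
  have hptmem : ∀ m σ, pt m σ ∈ G m (res m σ) ∩ K := fun m σ => hy m (res m σ)
  have hcauchy : ∀ σ, CauchySeq (fun m => pt m σ) := by
    intro σ
    apply cauchySeq_of_le_geometric (1 / 2 : ℝ) 1 (by norm_num)
    intro n
    have h1 : pt n σ ∈ G n (res n σ) := (hptmem n σ).1
    have h2 : pt (n + 1) σ ∈ G n (res n σ) := hnest' n σ (hptmem (n + 1) σ).1
    have := hGd n (res n σ) _ h1 _ h2
    simpa using this
  have hlim : ∀ σ, ∃ z, Tendsto (fun m => pt m σ) atTop (𝓝 z) :=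
    fun σ => cauchySeq_tendsto_of_complete (hcauchy σ)
  choose f hf using hlim
  have hfK : ∀ σ, f σ ∈ K :=
    fun σ => hKclosed.mem_of_tendsto (hf σ) (Eventually.of_forall fun m => (hptmem m σ).2)
  have hfG : ∀ m σ, f σ ∈ G m (res m σ) := by
    intro m σ
    have hcl : f σ ∈ closure (G (m + 1) (res (m + 1) σ)) := by
      apply mem_closure_of_tendsto (hf σ)
      filter_upwards [eventually_ge_atTop (m + 1)] with m' hm'
      exact hmono (m + 1) m' hm' σ (hptmem m' σ).1
    have := hGnest m (res (m + 1) σ)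
    rw [hresparent] at this
    exact this hcl
  have hdist : ∀ (m : ℕ) (σ τ : ℕ → Bool), res m σ = res m τ →
      dist (f σ) (f τ) ≤ (1 / 2 : ℝ) ^ m := by
    intro m σ τ h
    have h1 := hfG m σ
    have h2 := hfG m τ
    rw [← h] at h2
    exact hGd m (res m σ) _ h1 _ h2
  have hinc : ∀ σ τ : (ℕ → Bool), σ ≠ τ → ∀ n, (f σ, f τ) ∉ F n := by
    intro σ τ hστ n
    obtain ⟨k, hk⟩ := Function.ne_iff.1 hστ
    set m := max n k with hm
    have hsne : res (m + 1) σ ≠ res (m + 1) τ := by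
      intro h
      apply hk
      have := congrFun h ⟨k, Nat.lt_succ_of_le (le_max_right n k)⟩
      simpa [hres] using this
    exact hGpair m (res (m + 1) σ) (res (m + 1) τ) hsne n (le_max_left n k)
      (f σ) ⟨hfG (m + 1) σ, hfK σ⟩ (f τ) ⟨hfG (m + 1) τ, hfK τ⟩
  have hfne : ∀ σ τ : (ℕ → Bool), σ ≠ τ → f σ ≠ f τ := by
    intro σ τ hστ heq
    obtain ⟨n, hn⟩ := (hle (f σ) (f σ)).1 (hrefl (f σ))
    refine hinc σ τ hστ n ?_
    rw [heq] at hn ⊢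
    exact hn
  have hcont : Continuous f := by
    rw [continuous_iff_continuousAt]
    intro σ
    rw [ContinuousAt, Metric.tendsto_nhds]
    intro ε hε
    obtain ⟨m, hm⟩ := exists_pow_lt_of_lt_one hε (by norm_num : (1 / 2 : ℝ) < 1)
    have hopen : IsOpen {τ : ℕ → Bool | ∀ i : Fin m, τ i = σ i} := by
      have : {τ : ℕ → Bool | ∀ i : Fin m, τ i = σ i} =
          ⋂ i : Fin m, (fun τ : ℕ → Bool => τ i) ⁻¹' {σ i} := by
        ext τ; simp [Set.mem_iInter]
      rw [this]
      exact isOpen_iInter_of_finite fun i =>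
        (continuous_apply (i : ℕ)).isOpen_preimage _ (isOpen_discrete _)
    filter_upwards [hopen.mem_nhds (fun i => rfl)] with τ hτ
    have : res m τ = res m σ := funext fun i => hτ i
    calc dist (f τ) (f σ) ≤ (1 / 2 : ℝ) ^ m := hdist m τ σ this
      _ < ε := hm
  refine ⟨Set.range f, ⟨(isCompact_range hcont).isClosed, ?_⟩, Set.range_nonempty f, ?_⟩
  · rintro z ⟨σ, rfl⟩
    rw [accPt_iff_nhds]
    intro U hU
    obtain ⟨ε, hε, hball⟩ := Metric.mem_nhds_iff.1 hU
    obtain ⟨m, hm⟩ := exists_pow_lt_of_lt_one hε (by norm_num : (1 / 2 : ℝ) < 1)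
    set τ : ℕ → Bool := fun i => if i < m then σ i else !σ i with hτ
    have hτσ : τ ≠ σ := by
      intro h
      have := congrFun h m
      simp [hτ] at this
    have hrm : res m τ = res m σ := by
      funext i
      simp [hres, hτ, i.isLt]
    refine ⟨f τ, ⟨hball ?_, ⟨τ, rfl⟩⟩, hfne τ σ hτσ⟩
    rw [Metric.mem_ball]
    calc dist (f τ) (f σ) ≤ (1 / 2 : ℝ) ^ m := hdist m τ σ hrm
      _ < ε := hm
  · rintro a ⟨σ, rfl⟩ c ⟨τ, rfl⟩ hne
    have hστ : σ ≠ τ := by rintro rfl; exact hne rfl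
    constructor
    · intro hlef
      obtain ⟨n, hn⟩ := (hle _ _).1 hlef
      exact hinc σ τ hστ n hn
    · intro hlef
      obtain ⟨n, hn⟩ := (hle _ _).1 hlef
      exact hinc τ σ hστ.symm n hn

/-- An F_σ thin quasi-order on a Polish space contains no ω₁-chain
(neither strictly increasing nor strictly decreasing of length ω₁). -/
theorem fsigma_thin_order_no_omega1_chain
    {X : Type*} [TopologicalSpace X] [PolishSpace X]
    (le : X → X → Prop)
    (hrefl : ∀ x, le x x)
    (htrans : ∀ x y z, le x y → le y z → le x z)
    (hFσ : ∃ F : ℕ → Set (X × X), (∀ n, IsClosed (F n)) ∧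
      {p : X × X | le p.1 p.2} = ⋃ n, F n)
    (hthin : ¬ ∃ P : Set X, Perfect P ∧ P.Nonempty ∧
      ∀ a ∈ P, ∀ b ∈ P, a ≠ b → ¬ le a b ∧ ¬ le b a) :
    ¬ ∃ x : Ordinal → X,
      (∀ ξ ζ : Ordinal, ξ < ζ → ζ < (Cardinal.aleph 1).ord →
        le (x ξ) (x ζ) ∧ ¬ le (x ζ) (x ξ)) ∨
      (∀ ξ ζ : Ordinal, ξ < ζ → ζ < (Cardinal.aleph 1).ord →
        le (x ζ) (x ξ) ∧ ¬ le (x ξ) (x ζ)) := by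
  letI := TopologicalSpace.upgradeIsCompletelyMetrizable X
  rintro ⟨x, hx | hx⟩
  · obtain ⟨F, hFc, hF⟩ := hFσ
    have hle : ∀ a b, le a b ↔ ∃ n, (a, b) ∈ F n := by
      intro a b
      have := Set.ext_iff.1 hF (a, b)
      simpa [Set.mem_iUnion] using this
    exact hthin (aux_chain le hrefl F hFc hle x hx)
  · obtain ⟨F, hFc, hF⟩ := hFσ
    have hle : ∀ a b, (fun a b => le b a) a b ↔ ∃ n, (a, b) ∈ (fun n => Prod.swap ⁻¹' F n) n := by
      intro a b
      have := Set.ext_iff.1 hF (b, a)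
      simpa [Set.mem_iUnion] using this
    have hFc' : ∀ n, IsClosed (Prod.swap ⁻¹' F n) := fun n =>
      (hFc n).preimage continuous_swap
    have := aux_chain (fun a b => le b a) hrefl _ hFc' hle x
      (fun ξ ζ h1 h2 => hx ξ ζ h1 h2)
    obtain ⟨P, hP, hPne, hPanti⟩ := this
    exact hthin ⟨P, hP, hPne, fun a ha b hb hab =>
      ⟨(hPanti a ha b hb hab).2, (hPanti a ha b hb hab).1⟩⟩
end

section
/- Let X be a Polish space and ∼ an F_σ equivalence relation on X. If ∼ has uncountably many equivalence classes, then there exists a Cantor set (nonempty perfect set) P ⊆ X consisting of pairwise ∼-inequivalent elements; in particular ∼ has continuum many classes. -/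
open Set Metric

section Aux

variable {X : Type*} [TopologicalSpace X] (r : X → X → Prop)

/-- Points all of whose neighborhoods cannot be covered by countably many `r`-classes. -/
def goodSet : Set X :=
  {x | ∀ V ∈ nhds x, ∀ D : Set X, D.Countable → ∃ y ∈ V, ∀ d ∈ D, ¬ r y d}

variable [SecondCountableTopology X]

theorem goodSet_compl_transversal :
    ∃ D : Set X, D.Countable ∧ ∀ x ∉ goodSet r, ∃ d ∈ D, r x d := by
  classical
  by_cases h : ∃ x : X, x ∉ goodSet r
  · -- for each bad point choose an open nbhd with countable partial transversal
    have key : ∀ x : ↥((goodSet r)ᶜ), ∃ U : Set X, IsOpen U ∧ (x : X) ∈ U ∧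
        ∃ D : Set X, D.Countable ∧ ∀ y ∈ U, ∃ d ∈ D, r y d := by
      rintro ⟨x, hx⟩
      simp only [mem_compl_iff, goodSet, mem_setOf_eq, not_forall] at hx
      obtain ⟨V, hV, D, hDc, hD⟩ := hx
      obtain ⟨U, hUV, hUo, hxU⟩ := mem_nhds_iff.mp hV
      push_neg at hD
      exact ⟨U, hUo, hxU, D, hDc, fun y hy => hD y (hUV hy)⟩
    choose U hUo hxU D hDc hD using key
    obtain ⟨T, hTc, hT⟩ := TopologicalSpace.isOpen_iUnion_countable U hUo
    refine ⟨⋃ i ∈ T, D i, hTc.biUnion fun i _ => hDc i, fun x hx => ?_⟩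
    have hxmem : x ∈ ⋃ i, U i := mem_iUnion.mpr ⟨⟨x, hx⟩, hxU _⟩
    rw [← hT] at hxmem
    obtain ⟨i, hiT, hxi⟩ := mem_iUnion₂.mp hxmem
    obtain ⟨d, hd, hrd⟩ := hD i x hxi
    exact ⟨d, mem_iUnion₂.mpr ⟨i, hiT, hd⟩, hrd⟩
  · push_neg at h
    exact ⟨∅, countable_empty, fun x hx => absurd (h x) hx⟩

theorem goodSet_dense (x : X) (hx : x ∈ goodSet r) (V : Set X) (hV : V ∈ nhds x)
    (D : Set X) (hDc : D.Countable) :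
    ∃ y ∈ V, y ∈ goodSet r ∧ ∀ d ∈ D, ¬ r y d := by
  obtain ⟨D', hD'c, hD'⟩ := goodSet_compl_transversal r
  obtain ⟨y, hyV, hy⟩ := hx V hV (D ∪ D') (hDc.union hD'c)
  refine ⟨y, hyV, ?_, fun d hd => hy d (Or.inl hd)⟩
  by_contra hyg
  obtain ⟨d, hd, hrd⟩ := hD' y hyg
  exact hy d (Or.inr hd) hrd

theorem goodSet_nonempty
    (huncount : ¬ ∃ D : Set X, D.Countable ∧ ∀ x : X, ∃ d ∈ D, r x d) :
    (goodSet r).Nonempty := by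
  by_contra h
  rw [not_nonempty_iff_eq_empty] at h
  obtain ⟨D, hDc, hD⟩ := goodSet_compl_transversal r
  exact huncount ⟨D, hDc, fun x => hD x (by simp [h])⟩

end Aux
section MetricAux

variable {X : Type*} [MetricSpace X] [SecondCountableTopology X]
  (r : X → X → Prop) (F : ℕ → Set (X × X))

/-- The invariant maintained along the Cantor scheme construction. -/
def SchemeInv (n : ℕ) (c : (Fin n → Bool) → X) (ε : ℝ) : Prop :=
  0 < ε ∧ ε ≤ (2:ℝ)⁻¹ ^ n ∧ (∀ s, c s ∈ goodSet r) ∧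
  (∀ s t, s ≠ t → ¬ r (c s) (c t)) ∧
  (∀ s t, s ≠ t → ∀ m < n, ∀ a b : X, dist a (c s) ≤ ε → dist b (c t) ≤ ε →
    (a, b) ∉ F m)

theorem exists_split (hsymm : ∀ a b : X, r a b → r b a) {n : ℕ}
    (c : (Fin n → Bool) → X) (ε : ℝ) (hε : 0 < ε) (hgood : ∀ s, c s ∈ goodSet r)
    (S : Finset (Fin n → Bool)) :
    ∃ y : (Fin n → Bool) → X, ∀ s ∈ S,
      dist (y s) (c s) < ε ∧ y s ∈ goodSet r ∧ (∀ t, ¬ r (y s) (c t)) ∧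
      (∀ t ∈ S, t ≠ s → ¬ r (y s) (y t)) := by
  classical
  induction S using Finset.induction_on with
  | empty => exact ⟨c, by simp⟩
  | @insert a S haS ih =>
    obtain ⟨y, hy⟩ := ih
    have hD : (Set.range c ∪ y '' ↑S).Countable :=
      ((Set.finite_range c).union (S.finite_toSet.image y)).countable
    obtain ⟨z, hzball, hzgood, hz⟩ := goodSet_dense r (c a) (hgood a)
      (Metric.ball (c a) ε) (Metric.ball_mem_nhds _ hε) _ hD
    refine ⟨Function.update y a z, ?_⟩
    intro s hs
    rcases Finset.mem_insert.mp hs with rfl | hsS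
    · simp only [Function.update_self]
      refine ⟨Metric.mem_ball.mp hzball, hzgood,
        fun t => hz _ (Or.inl (Set.mem_range_self t)), ?_⟩
      intro t ht hts
      rcases Finset.mem_insert.mp ht with rfl | htS
      · exact absurd rfl hts
      · rw [Function.update_of_ne (by intro h; subst h; exact absurd htS haS)]
        exact hz _ (Or.inr ⟨t, htS, rfl⟩)
    · have hsa : s ≠ a := by intro h; subst h; exact absurd hsS haS
      rw [Function.update_of_ne hsa]
      obtain ⟨h1, h2, h3, h4⟩ := hy s hsS
      refine ⟨h1, h2, h3, ?_⟩
      intro t ht hts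
      rcases Finset.mem_insert.mp ht with rfl | htS
      · rw [Function.update_self]
        exact fun hr => hz (y s) (Or.inr ⟨s, hsS, rfl⟩) (hsymm _ _ hr)
      · rw [Function.update_of_ne (by intro h; subst h; exact absurd htS haS)]
        exact h4 t htS hts

theorem step_lemma (hequiv : Equivalence r) (hFc : ∀ m, IsClosed (F m))
    (hFr : ∀ m, ∀ p : X × X, p ∈ F m → r p.1 p.2)
    {n : ℕ} (c : (Fin n → Bool) → X) (ε : ℝ) (h : SchemeInv r F n c ε) :
    ∃ c' : (Fin (n+1) → Bool) → X, ∃ ε' : ℝ, SchemeInv r F (n+1) c' ε' ∧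
      ∀ s : Fin (n+1) → Bool, dist (c' s) (c (Fin.init s)) + ε' ≤ ε := by
  classical
  obtain ⟨hε, hεle, hgood, hpair, _⟩ := h
  obtain ⟨y, hy⟩ := exists_split r (fun a b => hequiv.symm) c ε hε hgood Finset.univ
  set c' : (Fin (n+1) → Bool) → X :=
    fun s => if s (Fin.last n) = true then y (Fin.init s) else c (Fin.init s) with hc'def
  have hc'good : ∀ s, c' s ∈ goodSet r := by
    intro s
    by_cases hb : s (Fin.last n) = true
    · simp only [hc'def, hb, if_true]; exact (hy _ (Finset.mem_univ _)).2.1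
    · simp only [hc'def, hb, if_false]; exact hgood _
  have hc'dist : ∀ s, dist (c' s) (c (Fin.init s)) < ε := by
    intro s
    by_cases hb : s (Fin.last n) = true
    · simp only [hc'def, hb, if_true]; exact (hy _ (Finset.mem_univ _)).1
    · simp only [hc'def]; rw [if_neg hb, dist_self]; exact hε
  have hc'pair : ∀ s t, s ≠ t → ¬ r (c' s) (c' t) := by
    intro s t hst
    by_cases hl : s (Fin.last n) = t (Fin.last n)
    · have hi : Fin.init s ≠ Fin.init t := by
        intro hh
        apply hst
        rw [← Fin.snoc_init_self s, ← Fin.snoc_init_self t, hh, hl]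
      by_cases hb : s (Fin.last n) = true
      · simp only [hc'def, hb, hl ▸ hb, if_true]
        exact (hy _ (Finset.mem_univ _)).2.2.2 _ (Finset.mem_univ _) hi.symm
      · simp only [hc'def, hb, hl ▸ hb, if_false]
        exact hpair _ _ hi
    · by_cases hb : s (Fin.last n) = true
      · have hb' : t (Fin.last n) ≠ true := fun hh => hl (hb.trans hh.symm)
        simp only [hc'def, hb, hb', if_true, if_false]
        exact (hy _ (Finset.mem_univ _)).2.2.1 _
      · have hb' : t (Fin.last n) = true := by
          cases hhs : s (Fin.last n) <;> cases hht : t (Fin.last n) <;>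
            simp_all
        simp only [hc'def, hb, hb', if_true, if_false]
        exact fun hr => (hy _ (Finset.mem_univ _)).2.2.1 (Fin.init s) (hequiv.symm hr)
  -- choose radii avoiding the closed sets
  have hδ : ∀ p : ((Fin (n+1) → Bool) × (Fin (n+1) → Bool) × Fin (n+1)),
      ∃ δ : ℝ, 0 < δ ∧ (p.1 ≠ p.2.1 → ∀ a b : X, dist a (c' p.1) ≤ δ →
        dist b (c' p.2.1) ≤ δ → (a, b) ∉ F (p.2.2 : ℕ)) := by
    rintro ⟨s, t, m⟩
    by_cases hst : s = t
    · exact ⟨1, one_pos, fun hh => absurd hst hh⟩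
    · have hmem : (c' s, c' t) ∈ (F (m : ℕ))ᶜ :=
        fun hmem => hc'pair s t hst (hFr m _ hmem)
      obtain ⟨δ, hδpos, hδs⟩ := Metric.isOpen_iff.mp (hFc (m : ℕ)).isOpen_compl _ hmem
      refine ⟨δ / 2, by linarith, fun _ a b ha hb => hδs ?_⟩
      rw [Metric.mem_ball, Prod.dist_eq]
      exact max_lt (lt_of_le_of_lt ha (by linarith)) (lt_of_le_of_lt hb (by linarith))
  choose δf hδf using hδ
  have hne : (Finset.univ :
      Finset ((Fin (n+1) → Bool) × (Fin (n+1) → Bool) × Fin (n+1))).Nonempty :=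
    Finset.univ_nonempty
  have hne2 : (Finset.univ : Finset (Fin (n+1) → Bool)).Nonempty := Finset.univ_nonempty
  set γ : (Fin (n+1) → Bool) → ℝ := fun s => ε - dist (c' s) (c (Fin.init s)) with hγdef
  have hγpos : ∀ s, 0 < γ s := fun s => by
    have := hc'dist s; simp only [hγdef]; linarith
  set δ0 := Finset.univ.inf' hne δf with hδ0def
  set γ0 := Finset.univ.inf' hne2 γ with hγ0def
  set ε' := min (min δ0 (γ0 / 2)) ((2:ℝ)⁻¹ ^ (n+1)) with hε'def
  have hδ0pos : 0 < δ0 := by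
    rw [hδ0def, Finset.lt_inf'_iff]
    exact fun p _ => (hδf p).1
  have hγ0pos : 0 < γ0 := by
    rw [hγ0def, Finset.lt_inf'_iff]
    exact fun s _ => hγpos s
  have hε'pos : 0 < ε' :=
    lt_min (lt_min hδ0pos (by linarith)) (by positivity)
  have hε'γ : ∀ s, ε' ≤ γ s := fun s => by
    have h1 : ε' ≤ γ0 / 2 := (min_le_left _ _).trans (min_le_right _ _)
    have h2 : γ0 ≤ γ s := Finset.inf'_le γ (Finset.mem_univ s)
    linarith
  refine ⟨c', ε', ⟨hε'pos, min_le_right _ _, hc'good, hc'pair, ?_⟩, ?_⟩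
  · intro s t hst m hm a b ha hb
    have hεδ : ε' ≤ δf (s, t, ⟨m, hm⟩) :=
      ((min_le_left _ _).trans (min_le_left _ _)).trans
        (Finset.inf'_le δf (Finset.mem_univ _))
    exact (hδf (s, t, ⟨m, hm⟩)).2 hst a b (ha.trans hεδ) (hb.trans hεδ)
  · intro s
    have := hε'γ s
    simp only [hγdef] at this
    linarith

theorem base_lemma (hne : (goodSet r).Nonempty) :
    ∃ c : (Fin 0 → Bool) → X, ∃ ε : ℝ, SchemeInv r F 0 c ε := by
  obtain ⟨x, hx⟩ := hne
  exact ⟨fun _ => x, 1, one_pos, by norm_num, fun _ => hx,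
    fun s t h => absurd (Subsingleton.elim s t) h,
    fun s t _ m hm => absurd hm (Nat.not_lt_zero m)⟩

end MetricAux
section Construction

open Filter Topology

variable {X : Type*} [MetricSpace X] [SecondCountableTopology X] [CompleteSpace X]
  (r : X → X → Prop) (F : ℕ → Set (X × X))
  (hequiv : Equivalence r) (hFc : ∀ m, IsClosed (F m))
  (hFr : ∀ m, ∀ p : X × X, p ∈ F m → r p.1 p.2)
  (hne : (goodSet r).Nonempty)

noncomputable def scheme :
    ∀ n : ℕ, Σ' (c : (Fin n → Bool) → X) (ε : ℝ), SchemeInv r F n c ε :=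
  fun n => Nat.rec
    ⟨(base_lemma r F hne).choose, (base_lemma r F hne).choose_spec.choose,
      (base_lemma r F hne).choose_spec.choose_spec⟩
    (fun n p =>
      ⟨(step_lemma r F hequiv hFc hFr p.1 p.2.1 p.2.2).choose,
       (step_lemma r F hequiv hFc hFr p.1 p.2.1 p.2.2).choose_spec.choose,
       (step_lemma r F hequiv hFc hFr p.1 p.2.1 p.2.2).choose_spec.choose_spec.1⟩) n

theorem scheme_link (n : ℕ) (s : Fin (n+1) → Bool) :
    dist ((scheme r F hequiv hFc hFr hne (n+1)).1 s)
        ((scheme r F hequiv hFc hFr hne n).1 (Fin.init s)) +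
      (scheme r F hequiv hFc hFr hne (n+1)).2.1 ≤
      (scheme r F hequiv hFc hFr hne n).2.1 :=
  (step_lemma r F hequiv hFc hFr _ _
    (scheme r F hequiv hFc hFr hne n).2.2).choose_spec.choose_spec.2 s

end Construction
open Filter Topology in
/-- An F_σ equivalence relation on a Polish space with uncountably many
classes admits a nonempty perfect set of pairwise inequivalent elements; in particular
it has continuum many classes. -/
theorem fsigma_equivalence_uncountably_many_classes
    {X : Type*} [TopologicalSpace X] [PolishSpace X]
    (r : X → X → Prop)
    (hequiv : Equivalence r)
    (hFσ : ∃ F : ℕ → Set (X × X), (∀ n, IsClosed (F n)) ∧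
      {p : X × X | r p.1 p.2} = ⋃ n, F n)
    (huncount : ¬ ∃ D : Set X, D.Countable ∧ ∀ x : X, ∃ d ∈ D, r x d) :
    (∃ P : Set X, Perfect P ∧ P.Nonempty ∧
      ∀ a ∈ P, ∀ b ∈ P, a ≠ b → ¬ r a b) ∧
    ∃ g : (ℕ → Bool) → X, Function.Injective g ∧
      ∀ σ τ, σ ≠ τ → ¬ r (g σ) (g τ) := by
  letI := TopologicalSpace.upgradeIsCompletelyMetrizable X
  obtain ⟨F, hFc, hFE⟩ := hFσ
  have hFr : ∀ m, ∀ p : X × X, p ∈ F m → r p.1 p.2 := by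
    intro m p hp
    have hmem : p ∈ ⋃ n, F n := mem_iUnion.mpr ⟨m, hp⟩
    rw [← hFE] at hmem
    exact hmem
  have hrF : ∀ a b : X, (∀ m, (a, b) ∉ F m) → ¬ r a b := by
    intro a b h hr
    have hmem : (a, b) ∈ {p : X × X | r p.1 p.2} := hr
    rw [hFE] at hmem
    obtain ⟨m, hm⟩ := mem_iUnion.mp hmem
    exact h m hm
  have hne : (goodSet r).Nonempty := goodSet_nonempty r huncount
  set sch := scheme r F hequiv hFc hFr hne with hschdef
  set c : ∀ n : ℕ, (Fin n → Bool) → X := fun n => (sch n).1 with hcdef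
  set ε : ℕ → ℝ := fun n => (sch n).2.1 with hεdef
  have hinv : ∀ n, SchemeInv r F n (c n) (ε n) := fun n => (sch n).2.2
  have hlink : ∀ n (s : Fin (n+1) → Bool),
      dist (c (n+1) s) (c n (Fin.init s)) + ε (n+1) ≤ ε n :=
    fun n s => scheme_link r F hequiv hFc hFr hne n s
  have hεpos : ∀ n, 0 < ε n := fun n => (hinv n).1
  have hεle : ∀ n, ε n ≤ (2:ℝ)⁻¹ ^ n := fun n => (hinv n).2.1
  have hinit : ∀ (σ : ℕ → Bool) (n : ℕ),
      Fin.init (fun i : Fin (n+1) => σ i) = fun i : Fin n => σ i := by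
    intro σ n
    funext i
    simp [Fin.init]
  set u : (ℕ → Bool) → ℕ → X := fun σ n => c n (fun i => σ i) with hudef
  have hu : ∀ (σ : ℕ → Bool) (n m : ℕ), n ≤ m → dist (u σ m) (u σ n) + ε m ≤ ε n := by
    intro σ n m h
    induction m, h using Nat.le_induction with
    | base => simp
    | succ m hm ih =>
      have h1 := hlink m (fun i : Fin (m+1) => σ i)
      rw [hinit σ m] at h1
      have h2 := dist_triangle (u σ (m+1)) (u σ m) (u σ n)
      have : dist (u σ (m+1)) (u σ m) + ε (m+1) ≤ ε m := h1
      linarith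
  have hεtend : Tendsto ε atTop (𝓝 0) := by
    apply squeeze_zero (fun n => (hεpos n).le) hεle
    exact tendsto_pow_atTop_nhds_zero_of_lt_one (by norm_num) (by norm_num)
  have hcauchy : ∀ σ, CauchySeq (u σ) := by
    intro σ
    apply cauchySeq_of_le_tendsto_0 (fun n => 2 * ε n)
    · intro n m N hn hm
      have h1 := hu σ N n hn
      have h2 := hu σ N m hm
      have h3 := dist_triangle (u σ n) (u σ N) (u σ m)
      have h4 := hεpos n
      have h5 := hεpos m
      rw [dist_comm (u σ N) (u σ m)] at h3
      linarith
    · simpa using hεtend.const_mul 2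
  have hglim : ∀ σ, ∃ x : X, Tendsto (u σ) atTop (𝓝 x) :=
    fun σ => cauchySeq_tendsto_of_complete (hcauchy σ)
  choose g hg using hglim
  have hgdist : ∀ σ n, dist (g σ) (u σ n) ≤ ε n := by
    intro σ n
    have htend : Tendsto (fun m => dist (u σ m) (u σ n)) atTop
        (𝓝 (dist (g σ) (u σ n))) := (hg σ).dist tendsto_const_nhds
    apply le_of_tendsto htend
    filter_upwards [eventually_ge_atTop n] with m hm
    have := hu σ n m hm
    have := hεpos m
    linarith
  have hkey : ∀ σ τ : ℕ → Bool, σ ≠ τ → ¬ r (g σ) (g τ) := by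
    intro σ τ hστ
    obtain ⟨k, hk⟩ : ∃ k, σ k ≠ τ k := by
      by_contra h
      push_neg at h
      exact hστ (funext h)
    apply hrF
    intro m hm
    set n := max (m + 1) (k + 1) with hndef
    have hmn : m < n := lt_of_lt_of_le (Nat.lt_succ_self m) (le_max_left _ _)
    have hkn : k < n := lt_of_lt_of_le (Nat.lt_succ_self k) (le_max_right _ _)
    have hst : (fun i : Fin n => σ i) ≠ (fun i : Fin n => τ i) := by
      intro h
      exact hk (congrFun h ⟨k, hkn⟩)
    exact (hinv n).2.2.2.2 _ _ hst m hmn (g σ) (g τ) (hgdist σ n) (hgdist τ n) hm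
  have hginj : Function.Injective g := by
    intro σ τ h
    by_contra hστ
    exact hkey σ τ hστ (h ▸ hequiv.refl (g σ))
  have hgcont : Continuous g := by
    rw [continuous_iff_continuousAt]
    intro σ
    show Tendsto g (𝓝 σ) (𝓝 (g σ))
    rw [Metric.tendsto_nhds]
    intro δ hδ
    obtain ⟨n, hn⟩ : ∃ n : ℕ, 2 * ((2:ℝ)⁻¹ ^ n) < δ := by
      obtain ⟨n, hn⟩ := exists_pow_lt_of_lt_one (by linarith : (0:ℝ) < δ / 2)
        (by norm_num : (2:ℝ)⁻¹ < 1)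
      exact ⟨n, by linarith⟩
    have hNopen : IsOpen {τ : ℕ → Bool | ∀ i < n, τ i = σ i} := by
      have heq : {τ : ℕ → Bool | ∀ i < n, τ i = σ i} =
          ⋂ i ∈ Finset.range n, (fun τ : ℕ → Bool => τ i) ⁻¹' {σ i} := by
        ext τ
        simp [Finset.mem_range]
      rw [heq]
      exact isOpen_biInter_finset fun i _ =>
        (continuous_apply i).isOpen_preimage _ (isOpen_discrete _)
    refine Filter.eventually_of_mem (hNopen.mem_nhds (fun i _ => rfl)) ?_
    intro τ hτ
    have hequ : u τ n = u σ n := by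
      have : (fun i : Fin n => τ i) = fun i : Fin n => σ i :=
        funext fun i => hτ i i.2
      simp only [hudef, this]
    have h1 := hgdist τ n
    have h2 := hgdist σ n
    have h3 := dist_triangle (g τ) (u τ n) (g σ)
    rw [hequ, dist_comm (u σ n) (g σ)] at h3
    rw [hequ] at h1
    have h4 := hεle n
    linarith
  have hnonempty : (Set.range g).Nonempty := ⟨g (fun _ => false), Set.mem_range_self _⟩
  have hperf : Perfect (Set.range g) := by
    constructor
    · exact (isCompact_range hgcont).isClosed
    · intro x hx
      obtain ⟨σ, rfl⟩ := hx
      rw [accPt_iff_nhds]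
      intro U hU
      set τ : ℕ → (ℕ → Bool) := fun n => Function.update σ n (!(σ n)) with hτdef
      have hτne : ∀ n, τ n ≠ σ := by
        intro n h
        have := congrFun h n
        simp [hτdef, Function.update_self] at this
      have hτtend : Tendsto τ atTop (𝓝 σ) := by
        rw [tendsto_pi_nhds]
        intro i
        have hev : ∀ᶠ n in atTop, τ n i = σ i := by
          filter_upwards [eventually_gt_atTop i] with n hn
          exact Function.update_of_ne (show i ≠ n by omega) _ _
        exact Tendsto.congr'
          (by filter_upwards [hev] with n hn; exact hn.symm) tendsto_const_nhds
      have hgtend : Tendsto (fun n => g (τ n)) atTop (𝓝 (g σ)) :=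
        (hgcont.continuousAt.tendsto).comp hτtend
      have hev : ∀ᶠ n in atTop, g (τ n) ∈ U := hgtend hU
      obtain ⟨n, hn⟩ := hev.exists
      exact ⟨g (τ n), ⟨hn, Set.mem_range_self _⟩, fun h => hτne n (hginj h)⟩
  refine ⟨⟨Set.range g, hperf, hnonempty, ?_⟩, g, hginj, hkey⟩
  rintro a ⟨σ, rfl⟩ b ⟨τ, rfl⟩ hab
  exact hkey σ τ (fun h => hab (congrArg g h))
end

section
/- Let X be a Polish space, ∼ a meager F_σ equivalence relation on X² (i.e., ∼ is meager as a subset of X² and is F_σ). If X is nonempty perfect, then there exists a Cantor set P ⊆ X of pairwise inequivalent elements. -/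
open Set

open Metric Filter

lemma myc_dc {T : ℕ → Type*} (R : ∀ n, T n → T (n+1) → Prop) (t0 : T 0)
    (h : ∀ n t, ∃ t', R n t t') :
    ∃ f : ∀ n, T n, f 0 = t0 ∧ ∀ n, R n (f n) (f (n+1)) :=
  ⟨fun n => Nat.rec t0 (fun n t => (h n t).choose) n, rfl, fun n => (h n _).choose_spec⟩

lemma myc_shrink_pair {X : Type*} [TopologicalSpace X] {D : Set (X × X)}
    (hDo : IsOpen D) (hDd : Dense D) {V W : Set X} (hV : IsOpen V) (hW : IsOpen W)
    (hVne : V.Nonempty) (hWne : W.Nonempty) :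
    ∃ V' W' : Set X, IsOpen V' ∧ IsOpen W' ∧ V'.Nonempty ∧ W'.Nonempty ∧
      V' ⊆ V ∧ W' ⊆ W ∧ V' ×ˢ W' ⊆ D := by
  have hO : IsOpen (D ∩ V ×ˢ W) := hDo.inter (hV.prod hW)
  have hne : (D ∩ V ×ˢ W).Nonempty := by
    have := hDd.inter_open_nonempty _ (hV.prod hW) (hVne.prod hWne)
    exact this.imp fun p hp => ⟨hp.2, hp.1⟩
  obtain ⟨⟨x, y⟩, hxy⟩ := hne
  obtain ⟨u, v, hu, hv, hxu, hyv, huv⟩ := isOpen_prod_iff.1 hO x y hxy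
  refine ⟨u, v, hu, hv, ⟨x, hxu⟩, ⟨y, hyv⟩, ?_, ?_, fun p hp => (huv hp).1⟩
  · intro a ha; exact ((huv ⟨ha, hyv⟩).2 : (a, y) ∈ V ×ˢ W).1
  · intro b hb; exact ((huv ⟨hxu, hb⟩).2 : (x, b) ∈ V ×ˢ W).2

lemma myc_shrink_list {X : Type*} [TopologicalSpace X] {I : Type*} [DecidableEq I]
    {D : Set (X × X)} (hDo : IsOpen D) (hDd : Dense D) :
    ∀ L : List (I × I), (∀ p ∈ L, p.1 ≠ p.2) → ∀ V : I → Set X,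
      (∀ i, IsOpen (V i)) → (∀ i, (V i).Nonempty) →
      ∃ V' : I → Set X, (∀ i, IsOpen (V' i)) ∧ (∀ i, (V' i).Nonempty) ∧
        (∀ i, V' i ⊆ V i) ∧ ∀ p ∈ L, (V' p.1) ×ˢ (V' p.2) ⊆ D := by
  intro L
  induction L with
  | nil => exact fun _ V hVo hVne => ⟨V, hVo, hVne, fun i => subset_rfl, by simp⟩
  | cons p L ih =>
    intro hL V hVo hVne
    obtain ⟨W, hWo, hWne, hWsub, hWD⟩ := ih (fun q hq => hL q (List.mem_cons_of_mem _ hq)) V hVo hVne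
    have hp : p.1 ≠ p.2 := hL p List.mem_cons_self
    obtain ⟨V1, V2, h1o, h2o, h1ne, h2ne, h1s, h2s, hprod⟩ :=
      myc_shrink_pair hDo hDd (hWo p.1) (hWo p.2) (hWne p.1) (hWne p.2)
    set V' : I → Set X := Function.update (Function.update W p.1 V1) p.2 V2 with hV'
    have hsub : ∀ i, V' i ⊆ W i := by
      intro i
      rcases eq_or_ne i p.2 with rfl | h2
      · simp [hV', Function.update_self]; exact h2s
      rcases eq_or_ne i p.1 with rfl | h1
      · simp [hV', Function.update_of_ne h2, Function.update_self, h1s]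
      · simp [hV', Function.update_of_ne h2, Function.update_of_ne h1]
    have h1 : V' p.1 = V1 := by
      rw [hV', Function.update_of_ne hp, Function.update_self]
    have h2 : V' p.2 = V2 := by simp [hV', Function.update_self]
    refine ⟨V', ?_, ?_, fun i => (hsub i).trans (hWsub i), ?_⟩
    · intro i
      rcases eq_or_ne i p.2 with rfl | hi2
      · rwa [h2]
      rcases eq_or_ne i p.1 with rfl | hi1
      · rwa [h1]
      · simpa [hV', Function.update_of_ne hi2, Function.update_of_ne hi1] using hWo i
    · intro i
      rcases eq_or_ne i p.2 with rfl | hi2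
      · rwa [h2]
      rcases eq_or_ne i p.1 with rfl | hi1
      · rwa [h1]
      · simpa [hV', Function.update_of_ne hi2, Function.update_of_ne hi1] using hWne i
    · intro q hq
      rcases List.mem_cons.1 hq with rfl | hq
      · rw [h1, h2]; exact hprod
      · exact (Set.prod_mono (hsub q.1) (hsub q.2)).trans (hWD q hq)

lemma myc_shrink_all {X : Type*} [TopologicalSpace X] {I : Type*} [DecidableEq I] [Fintype I]
    {D : Set (X × X)} (hDo : IsOpen D) (hDd : Dense D) (V : I → Set X)
    (hVo : ∀ i, IsOpen (V i)) (hVne : ∀ i, (V i).Nonempty) :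
    ∃ V' : I → Set X, (∀ i, IsOpen (V' i)) ∧ (∀ i, (V' i).Nonempty) ∧
      (∀ i, V' i ⊆ V i) ∧ ∀ i j, i ≠ j → (V' i) ×ˢ (V' j) ⊆ D := by
  obtain ⟨V', h1, h2, h3, h4⟩ := myc_shrink_list hDo hDd
    ((Finset.univ.filter (fun p : I × I => p.1 ≠ p.2)).toList)
    (by intro p hp; simpa using (Finset.mem_filter.1 (Finset.mem_toList.1 hp)).2) V hVo hVne
  exact ⟨V', h1, h2, h3, fun i j hij =>
    h4 (i, j) (Finset.mem_toList.2 (Finset.mem_filter.2 ⟨Finset.mem_univ _, hij⟩))⟩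

lemma myc_split {X : Type*} [MetricSpace X] (hXperf : Perfect (univ : Set X))
    {V : Set X} (hV : IsOpen V) (hVne : V.Nonempty) {ε : ℝ} (hε : 0 < ε) :
    ∃ V₀ V₁ : Set X, IsOpen V₀ ∧ IsOpen V₁ ∧ V₀.Nonempty ∧ V₁.Nonempty ∧
      closure V₀ ⊆ V ∧ closure V₁ ⊆ V ∧ Disjoint (closure V₀) (closure V₁) ∧
      EMetric.diam V₀ ≤ ENNReal.ofReal ε ∧ EMetric.diam V₁ ≤ ENNReal.ofReal ε := by
  obtain ⟨x, hx⟩ := hVne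
  have hacc := accPt_iff_nhds.1 (hXperf.acc x trivial)
  obtain ⟨y, ⟨hyV, -⟩, hyx⟩ := hacc V (hV.mem_nhds hx)
  have hd : 0 < dist x y := dist_pos.2 (Ne.symm hyx)
  obtain ⟨r₁, hr₁pos, hr₁⟩ := nhds_basis_closedBall.mem_iff.1 (hV.mem_nhds hx)
  obtain ⟨r₂, hr₂pos, hr₂⟩ := nhds_basis_closedBall.mem_iff.1 (hV.mem_nhds hyV)
  set ρ := min (min r₁ r₂) (min (ε / 3) (dist x y / 3)) with hρ
  have hρpos : 0 < ρ := by
    apply lt_min (lt_min hr₁pos hr₂pos) (lt_min (by linarith) (by linarith))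
  have hρε : ρ ≤ ε / 3 := le_trans (min_le_right _ _) (min_le_left _ _)
  have hρd : ρ ≤ dist x y / 3 := le_trans (min_le_right _ _) (min_le_right _ _)
  have hdiam : ∀ z : X, EMetric.diam (ball z ρ) ≤ ENNReal.ofReal ε := by
    intro z
    apply EMetric.diam_le
    intro a ha b hb
    rw [edist_dist]
    apply ENNReal.ofReal_le_ofReal
    have h1 : dist a z < ρ := mem_ball.1 ha
    have h2 : dist b z < ρ := mem_ball.1 hb
    have h3 : dist a b ≤ dist a z + dist z b := dist_triangle a z b
    have h4 : dist z b = dist b z := dist_comm z b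
    linarith
  refine ⟨ball x ρ, ball y ρ, isOpen_ball, isOpen_ball, ⟨x, mem_ball_self hρpos⟩,
    ⟨y, mem_ball_self hρpos⟩, ?_, ?_, ?_, hdiam x, hdiam y⟩
  · exact (closure_ball_subset_closedBall.trans
      ((closedBall_subset_closedBall (le_trans (min_le_left _ _) (min_le_left _ _))).trans hr₁))
  · exact (closure_ball_subset_closedBall.trans
      ((closedBall_subset_closedBall (le_trans (min_le_left _ _) (min_le_right _ _))).trans hr₂))
  · apply Disjoint.mono closure_ball_subset_closedBall closure_ball_subset_closedBall
    apply closedBall_disjoint_closedBall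
    linarith

lemma myc_scheme {X : Type*} [MetricSpace X] [Nonempty X] (hXperf : Perfect (univ : Set X))
    (E : ℕ → Set (X × X)) (hEo : ∀ n, IsOpen (E n)) (hEd : ∀ n, Dense (E n)) :
    ∃ A : List Bool → Set X,
      (∀ l, (A l).Nonempty) ∧
      (∀ l, EMetric.diam (A l) ≤ ENNReal.ofReal ((1/2 : ℝ)^l.length)) ∧
      (∀ (a : Bool) (l), closure (A (a :: l)) ⊆ A l) ∧
      (∀ l₁ l₂ : List Bool, l₁.length = l₂.length → l₁ ≠ l₂ →
        Disjoint (closure (A l₁)) (closure (A l₂))) ∧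
      (∀ (n : ℕ) (l₁ l₂ : List Bool), l₁.length = n+1 → l₂.length = n+1 → l₁ ≠ l₂ →
        (A l₁) ×ˢ (A l₂) ⊆ E n) := by
  obtain ⟨V₀, V₁, hb0o, hb1o, hb0ne, hb1ne, hb0cl, hb1cl, hbdisj, hb0d, hb1d⟩ :=
    myc_split hXperf isOpen_univ univ_nonempty (ε := 1) one_pos
  obtain ⟨f, hf0, hfrel⟩ := myc_dc
    (T := fun n => {U : List.Vector Bool n → Set X //
      (∀ s, IsOpen (U s)) ∧ (∀ s, (U s).Nonempty) ∧
      (∀ s, EMetric.diam (U s) ≤ ENNReal.ofReal ((1/2 : ℝ)^n)) ∧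
      ∀ s t, s ≠ t → Disjoint (closure (U s)) (closure (U t))})
    (R := fun n U U' => (∀ s, closure (U'.1 s) ⊆ U.1 s.tail) ∧
      (∀ s t, s ≠ t → (U'.1 s) ×ˢ (U'.1 t) ⊆ E n))
    ⟨fun _ => V₀, fun _ => hb0o, fun _ => hb0ne, fun _ => by simpa using hb0d,
      fun s t hst => absurd (Subsingleton.elim s t) hst⟩
    (by
      -- inductive step
      rintro n ⟨U, hUo, hUne, hUd, hUdisj⟩
      have hεpos : (0:ℝ) < (1/2 : ℝ)^(n+1) := by positivity
      choose W₀ W₁ h0o h1o h0ne h1ne h0cl h1cl hdisj h0d h1d using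
        fun t : List.Vector Bool n => myc_split hXperf (hUo t) (hUne t) hεpos
      set W : List.Vector Bool (n+1) → Set X :=
        fun s => if s.head = true then W₁ s.tail else W₀ s.tail with hW
      have hWf : ∀ s : List.Vector Bool (n+1), s.head = false → W s = W₀ s.tail := by
        intro s hs; rw [hW]; simp [hs]
      have hWt : ∀ s : List.Vector Bool (n+1), s.head = true → W s = W₁ s.tail := by
        intro s hs; rw [hW]; simp [hs]
      have hWo : ∀ s, IsOpen (W s) := by
        intro s; cases hs : s.head
        · rw [hWf s hs]; exact h0o s.tail
        · rw [hWt s hs]; exact h1o s.tail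
      have hWne : ∀ s, (W s).Nonempty := by
        intro s; cases hs : s.head
        · rw [hWf s hs]; exact h0ne s.tail
        · rw [hWt s hs]; exact h1ne s.tail
      have hWd : ∀ s, EMetric.diam (W s) ≤ ENNReal.ofReal ((1/2 : ℝ)^(n+1)) := by
        intro s; cases hs : s.head
        · rw [hWf s hs]; exact h0d s.tail
        · rw [hWt s hs]; exact h1d s.tail
      have hWcl : ∀ s, closure (W s) ⊆ U s.tail := by
        intro s; cases hs : s.head
        · rw [hWf s hs]; exact h0cl s.tail
        · rw [hWt s hs]; exact h1cl s.tail
      have hWdisj : ∀ s t, s ≠ t → Disjoint (closure (W s)) (closure (W t)) := by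
        intro s t hst
        by_cases ht : s.tail = t.tail
        · have hh : s.head ≠ t.head := by
            intro h
            exact hst (by rw [← s.cons_head_tail, ← t.cons_head_tail, h, ht])
          cases hs1 : s.head <;> cases hs2 : t.head
          · exact absurd (hs1.trans hs2.symm) hh
          · rw [hWf s hs1, hWt t hs2, ht]; exact hdisj t.tail
          · rw [hWt s hs1, hWf t hs2, ht]; exact (hdisj t.tail).symm
          · exact absurd (hs1.trans hs2.symm) hh
        · exact ((hUdisj s.tail t.tail ht).mono
            ((hWcl s).trans subset_closure) ((hWcl t).trans subset_closure))
      obtain ⟨U', h'o, h'ne, h'sub, h'pair⟩ := myc_shrink_all (hEo n) (hEd n) W hWo hWne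
      exact ⟨⟨U', h'o, h'ne, fun s => le_trans (EMetric.diam_mono (h'sub s)) (hWd s),
        fun s t hst => (hWdisj s t hst).mono (closure_mono (h'sub s)) (closure_mono (h'sub t))⟩,
        fun s => (closure_mono (h'sub s)).trans (hWcl s), h'pair⟩)
  have key : ∀ (n : ℕ) (l : List Bool) (h : l.length = n),
      (f l.length).1 ⟨l, rfl⟩ = (f n).1 ⟨l, h⟩ := by
    intro n l h; subst h; rfl
  refine ⟨fun l => (f l.length).1 ⟨l, rfl⟩, fun l => (f l.length).2.2.1 _,
    fun l => (f l.length).2.2.2.1 _, ?_, ?_, ?_⟩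
  · intro a l
    have h := (hfrel l.length).1 (⟨a :: l, rfl⟩ : List.Vector Bool (l.length + 1))
    have htail : List.Vector.tail (⟨a :: l, rfl⟩ : List.Vector Bool (l.length + 1))
        = ⟨l, rfl⟩ := rfl
    rw [htail] at h
    exact h
  · intro l₁ l₂ hlen hne
    dsimp only
    rw [key l₁.length l₂ hlen.symm]
    exact (f l₁.length).2.2.2.2 ⟨l₁, rfl⟩ ⟨l₂, hlen.symm⟩
      (fun h => hne (congrArg Subtype.val h))
  · intro n l₁ l₂ h₁ h₂ hne
    dsimp only
    rw [key (n+1) l₁ h₁, key (n+1) l₂ h₂]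
    exact (hfrel n).2 ⟨l₁, h₁⟩ ⟨l₂, h₂⟩ (fun h => hne (congrArg Subtype.val h))

/-- Mycielski instance: if X is a nonempty perfect Polish space and ∼ is a
meager F_σ equivalence relation (meager off the diagonal), then there is a Cantor set of
pairwise inequivalent elements. -/
theorem mycielski_meager_equivalence
    {X : Type*} [TopologicalSpace X] [PolishSpace X] [Nonempty X]
    (hXperf : Perfect (Set.univ : Set X))
    (r : X → X → Prop)
    (hequiv : Equivalence r)
    (hFσ : ∃ F : ℕ → Set (X × X), (∀ n, IsClosed (F n)) ∧
      {p : X × X | r p.1 p.2} = ⋃ n, F n)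
    (hmeager : IsMeagre {p : X × X | r p.1 p.2 ∧ p.1 ≠ p.2}) :
    ∃ P : Set X, Perfect P ∧ P.Nonempty ∧
      ∀ a ∈ P, ∀ b ∈ P, a ≠ b → ¬ r a b := by
  classical
  letI := TopologicalSpace.upgradeIsCompletelyMetrizable X
  rw [IsMeagre, mem_residual_iff] at hmeager
  obtain ⟨S, hSo, hSd, hSc, hSsub⟩ := hmeager
  obtain ⟨D, hD⟩ := (hSc.insert univ).exists_eq_range (insert_nonempty _ _)
  have hDmem : ∀ n, D n ∈ insert univ S := fun n => hD ▸ mem_range_self n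
  have hDo : ∀ n, IsOpen (D n) := by
    intro n
    rcases mem_insert_iff.1 (hDmem n) with h | h
    · rw [h]; exact isOpen_univ
    · exact hSo _ h
  have hDd : ∀ n, Dense (D n) := by
    intro n
    rcases mem_insert_iff.1 (hDmem n) with h | h
    · rw [h]; exact dense_univ
    · exact hSd _ h
  have hDsub : (⋂ n, D n) ⊆ {p : X × X | r p.1 p.2 ∧ p.1 ≠ p.2}ᶜ := by
    rw [← sInter_range, ← hD, sInter_insert]
    exact inter_subset_right.trans hSsub
  set E : ℕ → Set (X × X) := fun n => Nat.rec (D 0) (fun k Ek => Ek ∩ D (k+1)) n with hE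
  have hEsucc : ∀ n, E (n+1) = E n ∩ D (n+1) := fun n => rfl
  have hEo : ∀ n, IsOpen (E n) := by
    intro n
    induction n with
    | zero => exact hDo 0
    | succ k ih => rw [hEsucc]; exact ih.inter (hDo (k+1))
  have hEd : ∀ n, Dense (E n) := by
    intro n
    induction n with
    | zero => exact hDd 0
    | succ k ih => rw [hEsucc]; exact ih.inter_of_isOpen_left (hDd (k+1)) (hEo k)
  have hED : ∀ n j, j ≤ n → E n ⊆ D j := by
    intro n
    induction n with
    | zero =>
      intro j hj
      have : j = 0 := Nat.le_zero.1 hj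
      subst this; exact subset_rfl
    | succ k ih =>
      intro j hj
      rcases Nat.lt_succ_iff_lt_or_eq.1 (Nat.lt_succ_of_le hj) with h | h
      · rw [hEsucc]; exact inter_subset_left.trans (ih j (Nat.lt_succ_iff.1 h))
      · subst h; rw [hEsucc]; exact inter_subset_right
  obtain ⟨A, hAne, hAd, hAcl, hAdisj, hApair⟩ := myc_scheme hXperf E hEo hEd
  have hanti : CantorScheme.ClosureAntitone A := fun l a => hAcl a l
  have hdisjS : CantorScheme.Disjoint A := by
    intro l a b hab
    exact (hAdisj (a :: l) (b :: l) rfl (by simp [hab])).mono subset_closure subset_closure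
  have hvan : CantorScheme.VanishingDiam A := by
    intro x
    have hb : ∀ n : ℕ, EMetric.diam (A (PiNat.res x n)) ≤ ENNReal.ofReal ((1/2:ℝ)^n) := by
      intro n
      have := hAd (PiNat.res x n)
      rwa [PiNat.res_length] at this
    refine tendsto_of_tendsto_of_tendsto_of_le_of_le tendsto_const_nhds ?_
      (fun n => zero_le) hb
    have h1 : Tendsto (fun n : ℕ => ((1/2:ℝ)^n)) atTop (nhds 0) :=
      tendsto_pow_atTop_nhds_zero_of_lt_one (by norm_num) (by norm_num)
    simpa using ENNReal.tendsto_ofReal h1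
  have hdom : (CantorScheme.inducedMap A).1 = univ :=
    CantorScheme.ClosureAntitone.map_of_vanishingDiam hvan hanti hAne
  set g : (ℕ → Bool) → X :=
    fun x => (CantorScheme.inducedMap A).2 ⟨x, by rw [hdom]; exact mem_univ x⟩ with hg
  have hgmem : ∀ (x : ℕ → Bool) (n : ℕ), g x ∈ A (PiNat.res x n) :=
    fun x n => CantorScheme.map_mem _ n
  have hgc : Continuous g :=
    (CantorScheme.VanishingDiam.map_continuous hvan).comp
      (Continuous.subtype_mk continuous_id _)
  have hgi : Function.Injective g := by
    intro x y hxy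
    exact congrArg Subtype.val (hdisjS.map_injective hxy)
  have hgrel : ∀ x y : ℕ → Bool, x ≠ y → ∀ n, (g x, g y) ∈ D n := by
    intro x y hxy n
    obtain ⟨m, hm⟩ := Function.ne_iff.1 hxy
    have hmk : m < max n m + 1 := Nat.lt_succ_of_le (le_max_right n m)
    have hresne : PiNat.res x (max n m + 1) ≠ PiNat.res y (max n m + 1) := by
      intro h
      exact hm (PiNat.res_eq_res.1 h hmk)
    have hsub := hApair (max n m) _ _ (PiNat.res_length x (max n m + 1))
      (PiNat.res_length y (max n m + 1)) hresne
    exact hED (max n m) n (le_max_left n m)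
      (hsub ⟨hgmem x (max n m + 1), hgmem y (max n m + 1)⟩)
  have hgnr : ∀ x y : ℕ → Bool, x ≠ y → ¬ r (g x) (g y) := by
    intro x y hxy hr
    have h1 : (g x, g y) ∈ ⋂ n, D n := mem_iInter.2 (hgrel x y hxy)
    exact (hDsub h1) ⟨hr, fun h => hxy (hgi h)⟩
  refine ⟨Set.range g, ⟨(isCompact_range hgc).isClosed, ?_⟩, range_nonempty g, ?_⟩
  · -- Preperfect
    rintro p ⟨x, rfl⟩
    rw [accPt_iff_nhds]
    intro U hU
    set y : ℕ → (ℕ → Bool) := fun j => Function.update x j (!(x j)) with hy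
    have hyne : ∀ j, y j ≠ x := by
      intro j h
      have h2 := congrFun h j
      rw [hy] at h2
      simp only [Function.update_self] at h2
      exact Bool.not_ne_self _ h2
    have htend : Tendsto (fun j => g (y j)) atTop (nhds (g x)) := by
      apply (hgc.tendsto x).comp
      rw [tendsto_pi_nhds]
      intro i
      refine Tendsto.congr' ?_ (tendsto_const_nhds (x := x i))
      filter_upwards [eventually_gt_atTop i] with j hj
      rw [hy]
      simp [Function.update_of_ne (Nat.ne_of_lt hj)]
    obtain ⟨j, hj⟩ := (htend.eventually_mem hU).exists
    exact ⟨g (y j), ⟨hj, mem_range_self _⟩, fun h => hyne j (hgi h)⟩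
  · rintro a ⟨x, rfl⟩ b ⟨y, rfl⟩ hab
    exact hgnr x y (fun h => hab (by rw [h]))
end

section
/- Let X be a separable Banach space and let SPC ⊆ X^ℕ be the set of sequences (x_n) that are seminormalized, Schauder basic, Cesàro summable (the averages (x_0+...+x_{n-1})/n converge to 0 in norm), and C-Schreier spreading for some C ≥ 1. Then SPC is a Borel subset of X^ℕ (with the product topology). -/
open Set Finset Filter

section

variable {X : Type*} [NormedAddCommGroup X] [NormedSpace ℝ X]

/-- `(x_n)` is seminormalized: `0 < inf ‖x_n‖ ≤ sup ‖x_n‖ < ∞`. -/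
def Seminormalized (x : ℕ → X) : Prop :=
  ∃ c C : ℝ, 0 < c ∧ ∀ n, c ≤ ‖x n‖ ∧ ‖x n‖ ≤ C

/-- `(x_n)` is a Schauder basic sequence (nonzero with uniformly bounded basis
projections). -/
def SchauderBasicSeq (x : ℕ → X) : Prop :=
  (∀ n, x n ≠ 0) ∧ ∃ K : ℝ, 1 ≤ K ∧ ∀ m n : ℕ, m ≤ n → ∀ a : ℕ → ℝ,
    ‖∑ i ∈ Finset.range m, a i • x i‖ ≤ K * ‖∑ i ∈ Finset.range n, a i • x i‖

/-- `(x_n)` is Cesàro summable to 0: the averages `(x_0 + ⋯ + x_{n-1})/n` tend to `0`. -/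
def CesaroNull (x : ℕ → X) : Prop :=
  Tendsto (fun n : ℕ => (n : ℝ)⁻¹ • ∑ i ∈ Finset.range n, x i) atTop (nhds 0)

/-- `(x_n)` is `C`-Schreier spreading: for every `k` and every `k ≤ n_0 < ⋯ < n_k`,
`k ≤ m_0 < ⋯ < m_k`, the finite subsequences are `C`-equivalent. (By symmetry in
`n, m`, one inequality for all admissible pairs expresses `C`-equivalence.) -/
def SchreierSpreading (C : ℝ) (x : ℕ → X) : Prop :=
  ∀ (k : ℕ) (n m : ℕ → ℕ), StrictMono n → StrictMono m → k ≤ n 0 → k ≤ m 0 →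
    ∀ a : ℕ → ℝ,
      ‖∑ i ∈ Finset.range (k + 1), a i • x (n i)‖ ≤
        C * ‖∑ i ∈ Finset.range (k + 1), a i • x (m i)‖

end

/-- For a separable Banach space `X`, the set `SPC` of sequences in `X^ℕ`
which are seminormalized, Schauder basic, Cesàro summable and `C`-Schreier spreading for
some `C ≥ 1` is Borel in `X^ℕ` with the product topology. -/
theorem SPC_isBorel
    {X : Type*} [NormedAddCommGroup X] [NormedSpace ℝ X] [CompleteSpace X]
    [TopologicalSpace.SeparableSpace X] :
    @MeasurableSet (ℕ → X) (borel (ℕ → X))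
      {x : ℕ → X | Seminormalized x ∧ SchauderBasicSeq x ∧ CesaroNull x ∧
        ∃ C : ℝ, 1 ≤ C ∧ SchreierSpreading C x} := by
  letI : MeasurableSpace (ℕ → X) := borel (ℕ → X)
  haveI : BorelSpace (ℕ → X) := ⟨rfl⟩
  have key : ∀ (k : ℕ) (a : ℕ → ℝ) (σ : ℕ → ℕ),
      Continuous fun x : ℕ → X => ‖∑ i ∈ Finset.range k, a i • x (σ i)‖ :=
    fun k a σ =>
      (continuous_finset_sum _ fun i _ => (continuous_apply (σ i)).const_smul (a i)).norm
  have hsplit : {x : ℕ → X | Seminormalized x ∧ SchauderBasicSeq x ∧ CesaroNull x ∧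
        ∃ C : ℝ, 1 ≤ C ∧ SchreierSpreading C x}
      = {x : ℕ → X | Seminormalized x} ∩ ({x | SchauderBasicSeq x} ∩
        ({x | CesaroNull x} ∩ {x | ∃ C : ℝ, 1 ≤ C ∧ SchreierSpreading C x})) := rfl
  rw [hsplit]
  refine MeasurableSet.inter ?_ (MeasurableSet.inter ?_ (MeasurableSet.inter ?_ ?_))
  · -- Seminormalized
    have hA : {x : ℕ → X | Seminormalized x} =
        ⋃ (j : ℕ) (Q : ℕ), ⋂ n,
          {x : ℕ → X | ((j : ℝ) + 1)⁻¹ ≤ ‖x n‖ ∧ ‖x n‖ ≤ (Q : ℝ)} := by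
      ext x
      simp only [Set.mem_setOf_eq, Set.mem_iUnion, Set.mem_iInter]
      constructor
      · rintro ⟨c, C, hc, h⟩
        obtain ⟨j, hj⟩ := exists_nat_one_div_lt hc
        obtain ⟨Q, hQ⟩ := exists_nat_ge C
        refine ⟨j, Q, fun n => ⟨?_, (h n).2.trans hQ⟩⟩
        have h1 : ((j : ℝ) + 1)⁻¹ ≤ c := by rw [inv_eq_one_div]; exact hj.le
        exact h1.trans (h n).1
      · rintro ⟨j, Q, h⟩
        exact ⟨((j : ℝ) + 1)⁻¹, Q, by positivity, h⟩
    rw [hA]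
    refine MeasurableSet.iUnion fun j => MeasurableSet.iUnion fun Q =>
      MeasurableSet.iInter fun n => ?_
    exact ((isClosed_le continuous_const (continuous_apply n).norm).inter
      (isClosed_le (continuous_apply n).norm continuous_const)).measurableSet
  · -- SchauderBasicSeq
    have hB : {x : ℕ → X | SchauderBasicSeq x} =
        (⋂ n, {x : ℕ → X | x n ≠ 0}) ∩
        ⋃ K : ℕ, {x : ℕ → X | ∀ m n : ℕ, m ≤ n → ∀ a : ℕ → ℝ,
          ‖∑ i ∈ Finset.range m, a i • x i‖ ≤
            ((K : ℝ) + 1) * ‖∑ i ∈ Finset.range n, a i • x i‖} := by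
      ext x
      simp only [SchauderBasicSeq, Set.mem_setOf_eq, Set.mem_inter_iff, Set.mem_iInter,
        Set.mem_iUnion]
      refine and_congr Iff.rfl ?_
      constructor
      · rintro ⟨K, _, hK⟩
        obtain ⟨N, hN⟩ := exists_nat_ge K
        refine ⟨N, fun m n hmn a => (hK m n hmn a).trans ?_⟩
        exact mul_le_mul_of_nonneg_right (hN.trans (le_add_of_nonneg_right zero_le_one))
          (norm_nonneg _)
      · rintro ⟨K, hK⟩
        exact ⟨(K : ℝ) + 1, le_add_of_nonneg_left (Nat.cast_nonneg K), hK⟩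
    rw [hB]
    refine MeasurableSet.inter
      (MeasurableSet.iInter fun n => (isOpen_ne.preimage (continuous_apply n)).measurableSet)
      (MeasurableSet.iUnion fun K => ?_)
    have heq : {x : ℕ → X | ∀ m n : ℕ, m ≤ n → ∀ a : ℕ → ℝ,
          ‖∑ i ∈ Finset.range m, a i • x i‖ ≤
            ((K : ℝ) + 1) * ‖∑ i ∈ Finset.range n, a i • x i‖} =
        ⋂ (m : ℕ) (n : ℕ) (_ : m ≤ n) (a : ℕ → ℝ),
          {x : ℕ → X | ‖∑ i ∈ Finset.range m, a i • x i‖ ≤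
            ((K : ℝ) + 1) * ‖∑ i ∈ Finset.range n, a i • x i‖} := by
      ext x; simp only [Set.mem_setOf_eq, Set.mem_iInter]
    rw [heq]
    exact (isClosed_iInter fun m => isClosed_iInter fun n => isClosed_iInter fun _ =>
      isClosed_iInter fun a => isClosed_le (key m a id) (continuous_const.mul (key n a id))).measurableSet
  · -- CesaroNull
    have hC : {x : ℕ → X | CesaroNull x} =
        ⋂ j : ℕ, ⋃ N : ℕ, ⋂ (n : ℕ) (_ : N ≤ n),
          {x : ℕ → X | ‖(n : ℝ)⁻¹ • ∑ i ∈ Finset.range n, x i‖ ≤ ((j : ℝ) + 1)⁻¹} := by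
      ext x
      simp only [CesaroNull, Set.mem_setOf_eq, Set.mem_iInter, Set.mem_iUnion]
      constructor
      · intro h j
        have h2 := (NormedAddCommGroup.tendsto_nhds_zero.1 h) (((j : ℝ) + 1)⁻¹) (by positivity)
        obtain ⟨N, hN⟩ := eventually_atTop.1 h2
        exact ⟨N, fun n hn => (hN n hn).le⟩
      · intro h
        rw [NormedAddCommGroup.tendsto_nhds_zero]
        intro ε hε
        obtain ⟨j, hj⟩ := exists_nat_one_div_lt hε
        obtain ⟨N, hN⟩ := h j
        refine eventually_atTop.2 ⟨N, fun n hn => lt_of_le_of_lt (hN n hn) ?_⟩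
        rwa [← one_div]
    rw [hC]
    refine MeasurableSet.iInter fun j => MeasurableSet.iUnion fun N =>
      MeasurableSet.iInter fun n => MeasurableSet.iInter fun _ => ?_
    exact (isClosed_le
      ((continuous_finset_sum _ fun i _ => continuous_apply i).const_smul _).norm
      continuous_const).measurableSet
  · -- Schreier spreading
    have hD : {x : ℕ → X | ∃ C : ℝ, 1 ≤ C ∧ SchreierSpreading C x} =
        ⋃ N : ℕ, {x : ℕ → X | SchreierSpreading ((N : ℝ) + 1) x} := by
      ext x
      simp only [Set.mem_setOf_eq, Set.mem_iUnion]
      constructor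
      · rintro ⟨C, _, hC⟩
        obtain ⟨N, hN⟩ := exists_nat_ge C
        refine ⟨N, fun k n m hn hm h0n h0m a => (hC k n m hn hm h0n h0m a).trans ?_⟩
        exact mul_le_mul_of_nonneg_right (hN.trans (le_add_of_nonneg_right zero_le_one))
          (norm_nonneg _)
      · rintro ⟨N, hN⟩
        exact ⟨(N : ℝ) + 1, le_add_of_nonneg_left (Nat.cast_nonneg N), hN⟩
    rw [hD]
    refine MeasurableSet.iUnion fun N => ?_
    have heq : {x : ℕ → X | SchreierSpreading ((N : ℝ) + 1) x} =
        ⋂ (k : ℕ) (n : ℕ → ℕ) (m : ℕ → ℕ) (_ : StrictMono n) (_ : StrictMono m)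
          (_ : k ≤ n 0) (_ : k ≤ m 0) (a : ℕ → ℝ),
          {x : ℕ → X | ‖∑ i ∈ Finset.range (k + 1), a i • x (n i)‖ ≤
            ((N : ℝ) + 1) * ‖∑ i ∈ Finset.range (k + 1), a i • x (m i)‖} := by
      ext x; simp only [SchreierSpreading, Set.mem_setOf_eq, Set.mem_iInter]
    rw [heq]
    exact (isClosed_iInter fun k => isClosed_iInter fun n => isClosed_iInter fun m =>
      isClosed_iInter fun _ => isClosed_iInter fun _ => isClosed_iInter fun _ =>
      isClosed_iInter fun _ => isClosed_iInter fun a =>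
      isClosed_le (key (k + 1) a n) (continuous_const.mul (key (k + 1) a m))).measurableSet
end

section
/- Let X be a Banach space and (x_n) a seminormalized Schauder basic sequence in X (with basis constant K) which is C-Schreier spreading and Cesàro summable (‖(x_0+...+x_{n-1})/n‖ → 0). Then (x_n) is weakly null. -/
open Set Finset Filter

private lemma schreier_aux {X : Type*} [NormedAddCommGroup X] [NormedSpace ℝ X]
    (x : ℕ → X) (K : ℝ) (hK : 1 ≤ K)
    (hbasic : ∀ m n : ℕ, m ≤ n →
      ‖∑ i ∈ Finset.range m, x i‖ ≤ K * ‖∑ i ∈ Finset.range n, x i‖)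
    (C : ℝ) (hC : 1 ≤ C) (hspread : SchreierSpreading C x)
    (hcesaro : Tendsto (fun n : ℕ => (n : ℝ)⁻¹ • ∑ i ∈ Finset.range n, x i)
      atTop (nhds 0))
    (g : StrongDual ℝ X) (ε : ℝ) (hε : 0 < ε)
    (hfreq : ∃ᶠ n in atTop, ε ≤ g (x n)) : False := by
  obtain ⟨φ, hφ, hφg⟩ := Filter.extraction_of_frequently_atTop hfreq
  have hg0 : 0 < ‖g‖ := by
    rw [norm_pos_iff]
    intro h
    have h0 := hφg 0
    rw [h] at h0
    simp at h0
    linarith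
  have hC0 : (0:ℝ) < C := lt_of_lt_of_le zero_lt_one hC
  have hK1 : (0:ℝ) < K + 1 := by linarith
  have key : ∀ k : ℕ, ((k:ℝ) + 1) * ε ≤
      (‖g‖ * C * (K + 1)) * ‖∑ i ∈ Finset.range ((k + 1) + (k + 1)), x i‖ := by
    intro k
    have h1 : ((k:ℝ) + 1) * ε ≤ g (∑ i ∈ Finset.range (k + 1), x (φ (k + i))) := by
      rw [map_sum]
      calc ((k:ℝ) + 1) * ε = ∑ _i ∈ Finset.range (k + 1), ε := by
            rw [Finset.sum_const, Finset.card_range, nsmul_eq_mul]; push_cast; ring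
        _ ≤ _ := Finset.sum_le_sum fun i _ => hφg (k + i)
    have h2 : ‖∑ i ∈ Finset.range (k + 1), x (φ (k + i))‖ ≤
        C * ‖∑ i ∈ Finset.range (k + 1), x ((k + 1) + i)‖ := by
      have := hspread k (fun i => φ (k + i)) (fun i => (k + 1) + i)
        (fun a b hab => hφ (by omega)) (fun a b hab => by dsimp only; omega)
        (by simpa using hφ.le_apply) (by omega) (fun _ => 1)
      simpa using this
    have hsplit : ∑ i ∈ Finset.range ((k + 1) + (k + 1)), x i =
        (∑ i ∈ Finset.range (k + 1), x i) +
          ∑ i ∈ Finset.range (k + 1), x ((k + 1) + i) :=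
      Finset.sum_range_add x (k + 1) (k + 1)
    have h4 : ‖∑ i ∈ Finset.range (k + 1), x i‖ ≤
        K * ‖∑ i ∈ Finset.range ((k + 1) + (k + 1)), x i‖ :=
      hbasic (k + 1) ((k + 1) + (k + 1)) (by omega)
    have h5 : ‖∑ i ∈ Finset.range (k + 1), x ((k + 1) + i)‖ ≤
        ‖∑ i ∈ Finset.range ((k + 1) + (k + 1)), x i‖ +
          ‖∑ i ∈ Finset.range (k + 1), x i‖ := by
      calc ‖∑ i ∈ Finset.range (k + 1), x ((k + 1) + i)‖
          = ‖(∑ i ∈ Finset.range ((k + 1) + (k + 1)), x i) -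
              ∑ i ∈ Finset.range (k + 1), x i‖ := by rw [hsplit, add_sub_cancel_left]
        _ ≤ _ := norm_sub_le _ _
    have h3 : ‖∑ i ∈ Finset.range (k + 1), x ((k + 1) + i)‖ ≤
        (K + 1) * ‖∑ i ∈ Finset.range ((k + 1) + (k + 1)), x i‖ := by
      nlinarith [norm_nonneg (∑ i ∈ Finset.range ((k + 1) + (k + 1)), x i)]
    have h6 : g (∑ i ∈ Finset.range (k + 1), x (φ (k + i))) ≤
        ‖g‖ * ‖∑ i ∈ Finset.range (k + 1), x (φ (k + i))‖ :=
      (le_abs_self _).trans (by rw [← Real.norm_eq_abs]; exact g.le_opNorm _)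
    calc ((k:ℝ) + 1) * ε ≤ g (∑ i ∈ Finset.range (k + 1), x (φ (k + i))) := h1
      _ ≤ ‖g‖ * ‖∑ i ∈ Finset.range (k + 1), x (φ (k + i))‖ := h6
      _ ≤ ‖g‖ * (C * ‖∑ i ∈ Finset.range (k + 1), x ((k + 1) + i)‖) :=
          mul_le_mul_of_nonneg_left h2 (norm_nonneg g)
      _ ≤ ‖g‖ * (C * ((K + 1) * ‖∑ i ∈ Finset.range ((k + 1) + (k + 1)), x i‖)) :=
          mul_le_mul_of_nonneg_left
            (mul_le_mul_of_nonneg_left h3 hC0.le) (norm_nonneg g)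
      _ = _ := by ring
  set D := ‖g‖ * C * (K + 1) with hD
  have hD0 : 0 < D := mul_pos (mul_pos hg0 hC0) hK1
  rw [Metric.tendsto_atTop] at hcesaro
  obtain ⟨N, hN⟩ := hcesaro (ε / (2 * D)) (by positivity)
  have hm := hN ((N + 1) + (N + 1)) (by omega)
  rw [dist_zero_right, norm_smul, Real.norm_eq_abs,
    abs_of_nonneg (by positivity)] at hm
  set S := ∑ i ∈ Finset.range ((N + 1) + (N + 1)), x i with hSdef
  have hkey := key N
  have hp : (0:ℝ) < ((N + 1 + (N + 1) : ℕ) : ℝ) := by positivity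
  have h7 : ‖S‖ < ε / (2 * D) * ((N + 1 + (N + 1) : ℕ) : ℝ) := by
    calc ‖S‖ = ((N + 1 + (N + 1) : ℕ) : ℝ) *
        (((N + 1 + (N + 1) : ℕ) : ℝ)⁻¹ * ‖S‖) := by field_simp
      _ < ((N + 1 + (N + 1) : ℕ) : ℝ) * (ε / (2 * D)) :=
          mul_lt_mul_of_pos_left hm hp
      _ = _ := by ring
  have h8 : ε / (2 * D) * ((N + 1 + (N + 1) : ℕ) : ℝ) = (((N:ℝ) + 1) * ε) / D := by
    push_cast
    field_simp
    ring
  rw [h8] at h7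
  have h9 : ‖S‖ * D < ((N:ℝ) + 1) * ε := (lt_div_iff₀ hD0).mp h7
  nlinarith [hkey]

/-- A seminormalized Schauder basic sequence which is `C`-Schreier
spreading and Cesàro summable is weakly null. -/
theorem schreier_spreading_cesaro_weakly_null
    {X : Type*} [NormedAddCommGroup X] [NormedSpace ℝ X] [CompleteSpace X]
    (x : ℕ → X)
    (hsemi : ∃ c C : ℝ, 0 < c ∧ ∀ n, c ≤ ‖x n‖ ∧ ‖x n‖ ≤ C)
    (K : ℝ) (hK : 1 ≤ K)
    (hbasic : (∀ n, x n ≠ 0) ∧ ∀ m n : ℕ, m ≤ n → ∀ a : ℕ → ℝ,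
      ‖∑ i ∈ Finset.range m, a i • x i‖ ≤ K * ‖∑ i ∈ Finset.range n, a i • x i‖)
    (C : ℝ) (hC : 1 ≤ C) (hspread : SchreierSpreading C x)
    (hcesaro : Tendsto (fun n : ℕ => (n : ℝ)⁻¹ • ∑ i ∈ Finset.range n, x i)
      atTop (nhds 0)) :
    ∀ f : StrongDual ℝ X, Tendsto (fun n => f (x n)) atTop (nhds 0) := by
  intro f
  by_contra hf
  rw [Metric.tendsto_atTop] at hf
  push_neg at hf
  obtain ⟨ε, hε, hfreq⟩ := hf
  have hbasic' : ∀ m n : ℕ, m ≤ n →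
      ‖∑ i ∈ Finset.range m, x i‖ ≤ K * ‖∑ i ∈ Finset.range n, x i‖ := by
    intro m n h
    simpa using hbasic.2 m n h (fun _ => 1)
  have habs : ∃ᶠ n in atTop, ε ≤ |f (x n)| := by
    rw [frequently_atTop]
    intro N
    obtain ⟨n, hn, h⟩ := hfreq N
    exact ⟨n, hn, by simpa [Real.dist_eq] using h⟩
  have hor : (∃ᶠ n in atTop, ε ≤ f (x n)) ∨ (∃ᶠ n in atTop, ε ≤ (-f) (x n)) := by
    rw [← frequently_or_distrib]
    refine habs.mono fun n hn => ?_
    rcases le_abs.mp hn with h | h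
    · exact Or.inl h
    · exact Or.inr (by simpa using h)
  rcases hor with h | h
  · exact schreier_aux x K hK hbasic' C hC hspread hcesaro f ε hε h
  · exact schreier_aux x K hK hbasic' C hC hspread hcesaro (-f) ε hε h
end

section
/- Let K ≥ 1 and let (u_n) be a Schauder basic sequence in a Banach space. Define the symmetric relation ≈_K on [ℕ] × [ℕ] by L ≈_K M iff either (u_n)_{n∈L} is K-dominated by (u_n)_{n∈M} or (u_n)_{n∈M} is K-dominated by (u_n)_{n∈L}. Then ≈_K is a closed subset of [ℕ] × [ℕ]; in particular, if U ⊆ [ℕ] satisfies L ≈_K M for all L, M ∈ U, then the same holds for all L, M in the closure of U in [ℕ]. -/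
open Set Finset

/-- The Polish space `[ℕ]` of infinite subsets of ℕ inside `2^ℕ`. -/
abbrev InfSubsetNat : Type := {f : ℕ → Bool // {n : ℕ | f n = true}.Infinite}

/-- The increasing enumeration of an infinite subset of ℕ. -/
noncomputable def infEnum (L : InfSubsetNat) (i : ℕ) : ℕ :=
  Nat.nth (fun n => L.1 n = true) i

/-- `L` is `K`-dominated by `M` along the basic sequence `u`. -/
def DomK {U : Type*} [NormedAddCommGroup U] [NormedSpace ℝ U]
    (u : ℕ → U) (K : ℝ) (L M : InfSubsetNat) : Prop :=
  ∀ k : ℕ, ∀ a : ℕ → ℝ,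
    ‖∑ i ∈ Finset.range (k + 1), a i • u (infEnum L i)‖ ≤
      K * ‖∑ i ∈ Finset.range (k + 1), a i • u (infEnum M i)‖

lemma count_congr' {p q : ℕ → Prop} [DecidablePred p] [DecidablePred q] {n : ℕ}
    (h : ∀ m < n, (p m ↔ q m)) : Nat.count p n = Nat.count q n := by
  rw [Nat.count_eq_card_filter_range, Nat.count_eq_card_filter_range]
  congr 1
  apply Finset.filter_congr
  intro x hx
  simpa using h x (Finset.mem_range.mp hx)

lemma nth_congr {p q : ℕ → Prop} (hp : (setOf p).Infinite) {i n : ℕ}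
    (h : ∀ m ≤ n, (p m ↔ q m)) (hn : Nat.nth p i = n) : Nat.nth q i = n := by
  classical
  have hpn : p n := hn ▸ Nat.nth_mem_of_infinite hp i
  have hqn : q n := (h n le_rfl).mp hpn
  have hcount : Nat.count q n = i := by
    rw [← count_congr' (fun m hm => h m hm.le), ← hn, Nat.count_nth_of_infinite hp]
  rw [← hcount, Nat.nth_count hqn]

lemma infEnum_continuous (i : ℕ) : Continuous (fun L : InfSubsetNat => infEnum L i) := by
  apply IsLocallyConstant.continuous
  rw [IsLocallyConstant.iff_exists_open]
  intro L
  set n := infEnum L i with hn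
  refine ⟨{L' : InfSubsetNat | ∀ m ≤ n, L'.1 m = L.1 m}, ?_, fun m _ => rfl, ?_⟩
  · have : {L' : InfSubsetNat | ∀ m ≤ n, L'.1 m = L.1 m} =
        ⋂ m ∈ Finset.range (n + 1), {L' : InfSubsetNat | L'.1 m = L.1 m} := by
      ext L'
      simp [Nat.lt_succ_iff]
    rw [this]
    apply isOpen_biInter_finset
    intro m _
    have : Continuous (fun L' : InfSubsetNat => L'.1 m) :=
      (continuous_apply m).comp continuous_subtype_val
    exact IsOpen.preimage this (isOpen_discrete {L.1 m})
  · intro L' hL'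
    exact nth_congr L.2 (fun m hm => by rw [hL' m hm]) hn.symm

/-- The symmetric relation `≈_K` (`L ≈_K M` iff one of the two
subsequences K-dominates the other) is closed in `[ℕ] × [ℕ]`; in particular it passes
from a set `U` to its closure. -/
theorem symmetric_K_domination_closed
    {U : Type*} [NormedAddCommGroup U] [NormedSpace ℝ U]
    (u : ℕ → U)
    (hbasic : (∀ n, u n ≠ 0) ∧ ∃ Kb : ℝ, 1 ≤ Kb ∧ ∀ m n : ℕ, m ≤ n → ∀ a : ℕ → ℝ,
      ‖∑ i ∈ Finset.range m, a i • u i‖ ≤ Kb * ‖∑ i ∈ Finset.range n, a i • u i‖)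
    (K : ℝ) (hK : 1 ≤ K) :
    IsClosed {p : InfSubsetNat × InfSubsetNat | DomK u K p.1 p.2 ∨ DomK u K p.2 p.1} ∧
    ∀ V : Set InfSubsetNat,
      (∀ L ∈ V, ∀ M ∈ V, DomK u K L M ∨ DomK u K M L) →
      ∀ L ∈ closure V, ∀ M ∈ closure V, DomK u K L M ∨ DomK u K M L := by
  have hnorm : ∀ (k : ℕ) (a : ℕ → ℝ), Continuous (fun L : InfSubsetNat =>
      ‖∑ i ∈ Finset.range (k + 1), a i • u (infEnum L i)‖) := by
    intro k a
    apply Continuous.norm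
    apply continuous_finset_sum
    intro i _
    exact Continuous.const_smul (continuous_of_discreteTopology.comp (infEnum_continuous i)) _
  have hdom : ∀ f g : InfSubsetNat × InfSubsetNat → InfSubsetNat,
      Continuous f → Continuous g →
      IsClosed {p : InfSubsetNat × InfSubsetNat | DomK u K (f p) (g p)} := by
    intro f g hf hg
    have : {p : InfSubsetNat × InfSubsetNat | DomK u K (f p) (g p)} =
        ⋂ k : ℕ, ⋂ a : ℕ → ℝ, {p |
          ‖∑ i ∈ Finset.range (k + 1), a i • u (infEnum (f p) i)‖ ≤
            K * ‖∑ i ∈ Finset.range (k + 1), a i • u (infEnum (g p) i)‖} := by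
      ext p; simp [DomK, Set.mem_iInter]
    rw [this]
    refine isClosed_iInter fun k => isClosed_iInter fun a => ?_
    exact isClosed_le ((hnorm k a).comp hf) (continuous_const.mul ((hnorm k a).comp hg))
  have hclosed : IsClosed {p : InfSubsetNat × InfSubsetNat |
      DomK u K p.1 p.2 ∨ DomK u K p.2 p.1} := by
    have h1 := hdom Prod.fst Prod.snd continuous_fst continuous_snd
    have h2 := hdom Prod.snd Prod.fst continuous_snd continuous_fst
    exact h1.union h2
  refine ⟨hclosed, fun V hV L hL M hM => ?_⟩
  have hsub : V ×ˢ V ⊆ {p : InfSubsetNat × InfSubsetNat |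
      DomK u K p.1 p.2 ∨ DomK u K p.2 p.1} := fun p hp => hV p.1 hp.1 p.2 hp.2
  have : (L, M) ∈ closure (V ×ˢ V) := by
    rw [closure_prod_eq]
    exact ⟨hL, hM⟩
  exact closure_minimal hsub hclosed this
end

section
/- Let WO ⊆ 2^{ℕ×ℕ} be the set of (characteristic functions of) well-orderings of ℕ, and for α ∈ WO let |α| be the unique ordinal order-isomorphic to (ℕ, <_α). If B ⊆ WO is analytic, then sup{|α| : α ∈ B} < ω₁. -/
open MeasureTheory Set Ordinal

namespace WOBound

/-- Initial segment of `x` of length `n`, as a list. -/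
def seg (x : ℕ → ℕ) (n : ℕ) : List ℕ := (List.range n).map x

lemma seg_length (x : ℕ → ℕ) (n : ℕ) : (seg x n).length = n := by
  simp [seg]

lemma seg_getD (x : ℕ → ℕ) {n i : ℕ} (h : i < n) : (seg x n).getD i 0 = x i := by
  rw [List.getD_eq_getElem _ _ (by simpa [seg_length] using h)]
  simp [seg]

lemma seg_succ (x : ℕ → ℕ) (n : ℕ) : seg x (n + 1) = seg x n ++ [x n] := by
  simp [seg, List.range_succ]

/-- `t` is a strictly decreasing finite chain for the ordering coded by `α`. -/
def chainP (α : ℕ × ℕ → Bool) (t : List ℕ) : Prop :=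
  ∀ i j, i < j → j < t.length → α (t.getD j 0, t.getD i 0) = true

lemma chainP_append {α : ℕ × ℕ → Bool} {t : List ℕ} {m : ℕ} (hc : chainP α t)
    (hb : ∀ i, i < t.length → α (m, t.getD i 0) = true) : chainP α (t ++ [m]) := by
  intro i j hij hj
  simp only [List.length_append, List.length_singleton] at hj
  have hi : i < t.length := by omega
  rw [List.getD_append _ _ _ _ hi]
  rcases Nat.lt_or_ge j t.length with hjt | hjt
  · rw [List.getD_append _ _ _ _ hjt]; exact hc i j hij hjt
  · have : j = t.length := by omega
    subst this
    rw [List.getD_append_right _ _ _ _ le_rfl, Nat.sub_self]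
    exact hb i hi


lemma exists_descending_of_not_wf {β : Type*} {r : β → β → Prop} (h : ¬ WellFounded r) :
    ∃ g : ℕ → β, ∀ n, r (g (n + 1)) (g n) := by
  have h1 : ∃ a, ¬ Acc r a := by
    by_contra hc; push_neg at hc; exact h ⟨hc⟩
  have h2 : ∀ a, ¬ Acc r a → ∃ b, r b a ∧ ¬ Acc r b := by
    intro a ha
    by_contra hc
    push_neg at hc
    exact ha (Acc.intro a fun b hb => hc b hb)
  choose F hF1 hF2 using h2
  obtain ⟨a0, ha0⟩ := h1
  let G : ℕ → {a // ¬ Acc r a} :=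
    fun n => Nat.rec ⟨a0, ha0⟩ (fun _ p => ⟨F p.1 p.2, hF2 p.1 p.2⟩) n
  exact ⟨fun n => (G n).1, fun n => hF1 _ _⟩

lemma no_descending_of_wf {β : Type*} {r : β → β → Prop} (hw : WellFounded r) (t : ℕ → β)
    (ht : ∀ n, r (t (n + 1)) (t n)) : False := by
  have key : ∀ a, ∀ n, t n = a → False := fun a =>
    hw.induction (C := fun a => ∀ n, t n = a → False) a
      (fun a IH n hn => IH (t (n + 1)) (by rw [← hn]; exact ht n) (n + 1) rfl)
  exact key (t 0) 0 rfl

/-- Admissible nodes of the unraveling tree: `p.1` is a stem for a point of Baire space,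
`p.2` an attempted descending chain, and some `x` extending `p.1` makes `p.2` decreasing
for `f x`. -/
def Adm (f : (ℕ → ℕ) → ℕ × ℕ → Bool) (p : List ℕ × List ℕ) : Prop :=
  ∃ x : ℕ → ℕ, (∀ i, i < p.1.length → x i = p.1.getD i 0) ∧ chainP (f x) p.2

/-- The (reversed) tree relation: `R f a b` iff `a` is an admissible one-step extension of
`b`. -/
def R (f : (ℕ → ℕ) → ℕ × ℕ → Bool) (a b : List ℕ × List ℕ) : Prop :=
  Adm f a ∧ (∃ k, a.1 = b.1 ++ [k]) ∧ (∃ m, a.2 = b.2 ++ [m])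

lemma wf_R (f : (ℕ → ℕ) → ℕ × ℕ → Bool) (hf : Continuous f)
    (hWO : ∀ x : ℕ → ℕ, WellFounded (fun n m : ℕ => f x (n, m) = true)) :
    WellFounded (R f) := by
  by_contra hnwf
  obtain ⟨g, hstep⟩ := exists_descending_of_not_wf hnwf
  have hadm : ∀ n, Adm f (g (n + 1)) := fun n => (hstep n).1
  -- lengths
  have hlen1 : ∀ n, (g n).1.length = (g 0).1.length + n := by
    intro n; induction n with
    | zero => rfl
    | succ n ih =>
      obtain ⟨k, hk⟩ := (hstep n).2.1
      rw [hk, List.length_append, ih]; simp; omega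
  have hlen2 : ∀ n, (g n).2.length = (g 0).2.length + n := by
    intro n; induction n with
    | zero => rfl
    | succ n ih =>
      obtain ⟨m, hm⟩ := (hstep n).2.2
      rw [hm, List.length_append, ih]; simp; omega
  -- prefixes
  have hpre1 : ∀ m n, m ≤ n → (g m).1 <+: (g n).1 := by
    intro m n hmn
    induction n with
    | zero => rw [Nat.le_zero.1 hmn]
    | succ n ih =>
      rcases Nat.lt_or_ge m (n + 1) with h | h
      · obtain ⟨k, hk⟩ := (hstep n).2.1
        exact (ih (by omega)).trans ⟨[k], hk.symm⟩
      · have : m = n + 1 := by omega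
        rw [this]
  have hpre2 : ∀ m n, m ≤ n → (g m).2 <+: (g n).2 := by
    intro m n hmn
    induction n with
    | zero => rw [Nat.le_zero.1 hmn]
    | succ n ih =>
      rcases Nat.lt_or_ge m (n + 1) with h | h
      · obtain ⟨k, hk⟩ := (hstep n).2.2
        exact (ih (by omega)).trans ⟨[k], hk.symm⟩
      · have : m = n + 1 := by omega
        rw [this]
  have getD_pre : ∀ {l l' : List ℕ}, l <+: l' → ∀ i, i < l.length → l'.getD i 0 = l.getD i 0 := by
    rintro l l' ⟨s, rfl⟩ i hi
    exact (List.getD_append _ _ _ _ hi)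
  set L1 := (g 0).1.length with hL1
  set L2 := (g 0).2.length with hL2
  set x : ℕ → ℕ := fun i => (g (i + 1)).1.getD i 0 with hxdef
  set t : ℕ → ℕ := fun i => (g (i + 1)).2.getD (L2 + i) 0 with htdef
  have hx : ∀ i n, i < n → (g n).1.getD i 0 = x i := by
    intro i n hin
    exact getD_pre (hpre1 (i + 1) n hin) i (by rw [hlen1]; omega)
  have ht : ∀ i n, i < n → (g n).2.getD (L2 + i) 0 = t i := by
    intro i n hin
    exact getD_pre (hpre2 (i + 1) n hin) (L2 + i) (by rw [hlen2]; omega)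
  choose y hy1 hy2 using hadm
  -- y n → x
  have hyx : Filter.Tendsto y Filter.atTop (nhds x) := by
    rw [tendsto_pi_nhds]
    intro i
    refine Filter.Tendsto.congr' ?_ tendsto_const_nhds
    filter_upwards [Filter.eventually_ge_atTop i] with n hn
    rw [hy1 n i (by rw [hlen1]; omega), hx i (n + 1) (by omega)]
  have key : ∀ i j, i < j → f x (t j, t i) = true := by
    intro i j hij
    have hG : Filter.Tendsto (fun n => f (y n) (t j, t i)) Filter.atTop
        (nhds (f x (t j, t i))) :=
      (((continuous_apply ((t j, t i))).comp hf).tendsto x).comp hyx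
    rw [nhds_discrete, Filter.tendsto_pure] at hG
    obtain ⟨n, hn1, hn2⟩ := (hG.and (Filter.eventually_ge_atTop j)).exists
    rw [← hn1]
    have := hy2 n (L2 + i) (L2 + j) (by omega) (by rw [hlen2]; omega)
    rwa [ht i (n + 1) (by omega), ht j (n + 1) (by omega)] at this
  exact no_descending_of_wf (hWO x) t fun n => key n (n + 1) (Nat.lt_succ_self n)

lemma rank_lt_omega1 {β : Type} [Countable β] (r : β → β → Prop) [IsWellFounded β r] (a : β) :
    IsWellFounded.rank r a < (Cardinal.aleph 1).ord := by
  induction a using IsWellFounded.induction r with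
  | ind a IH =>
    rw [IsWellFounded.rank_eq]
    have H := Ordinal.iSup_lt_omega_one (f := fun b : {b // r b a} => Order.succ (IsWellFounded.rank r b.1))
      (fun b => by
        rw [← Cardinal.ord_aleph]
        exact (Cardinal.isSuccLimit_ord (Cardinal.aleph0_le_aleph 1)).succ_lt (IH b b.2))
    rw [← Cardinal.ord_aleph] at H
    exact H

end WOBound

open WOBound in
/-- Boundedness for WO: if `B` is an analytic set of codes of
well-orderings of ℕ, then `sup {|α| : α ∈ B} < ω₁`. -/
theorem WO_boundedness
    (B : Set (ℕ × ℕ → Bool))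
    (hB : MeasureTheory.AnalyticSet B)
    (hBWO : ∀ α ∈ B, IsWellOrder ℕ (fun n m => α (n, m) = true)) :
    ∃ ξ : Ordinal, ξ < (Cardinal.aleph 1).ord ∧
      ∀ α ∈ B, ∀ h : IsWellOrder ℕ (fun n m => α (n, m) = true),
        @Ordinal.type ℕ (fun n m => α (n, m) = true) h < ξ := by
  rw [MeasureTheory.AnalyticSet] at hB
  rcases hB with rfl | ⟨f, hf, rfl⟩
  · refine ⟨1, ?_, by simp⟩
    calc (1 : Ordinal) < Cardinal.aleph0.ord := by
            rw [Cardinal.ord_aleph0]; exact Ordinal.one_lt_omega0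
      _ < (Cardinal.aleph 1).ord :=
            Cardinal.ord_lt_ord.2 (by simpa using Cardinal.aleph0_lt_aleph_one)
  · have hWO : ∀ x : ℕ → ℕ, IsWellOrder ℕ (fun n m => f x (n, m) = true) :=
      fun x => hBWO (f x) ⟨x, rfl⟩
    have hwf : WellFounded (R f) :=
      wf_R f hf fun x => (hWO x).toIsWellFounded.wf
    letI : IsWellFounded (List ℕ × List ℕ) (R f) := ⟨hwf⟩
    refine ⟨IsWellFounded.rank (R f) ([], []) + 1, ?_, ?_⟩
    · rw [Ordinal.add_one_eq_succ]
      exact (Cardinal.isSuccLimit_ord (Cardinal.aleph0_le_aleph 1)).succ_lt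
        (rank_lt_omega1 (R f) ([], []))
    · rintro α ⟨x, rfl⟩ h
      haveI := h
      set lt : ℕ → ℕ → Prop := fun n m => f x (n, m) = true with hlt
      -- key claim: rank bounds typein
      have claim : ∀ m : ℕ, ∀ t : List ℕ, chainP (f x) t →
          (∀ i, i < t.length → f x (m, t.getD i 0) = true) →
          Ordinal.typein lt m ≤
            IsWellFounded.rank (R f) (seg x (t.length + 1), t ++ [m]) := by
        intro m
        induction m using (h.toIsWellFounded.wf).induction with
        | _ m IH =>
          intro t hct hbt
          set q : List ℕ × List ℕ := (seg x (t.length + 1), t ++ [m]) with hq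
          by_contra hcon
          push_neg at hcon
          have h1 : IsWellFounded.rank (R f) q < Ordinal.type lt :=
            hcon.trans (Ordinal.typein_lt_type lt m)
          obtain ⟨m', hm'⟩ := Ordinal.typein_surj lt h1
          have hm'm : lt m' m := (Ordinal.typein_lt_typein lt).1 (hm' ▸ hcon)
          -- chain conditions for t ++ [m]
          have hct' : chainP (f x) (t ++ [m]) := chainP_append hct hbt
          have hbt' : ∀ i, i < (t ++ [m]).length → f x (m', (t ++ [m]).getD i 0) = true := by
            intro i hi
            simp only [List.length_append, List.length_singleton] at hi
            rcases Nat.lt_or_ge i t.length with hit | hit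
            · rw [List.getD_append _ _ _ _ hit]
              exact IsTrans.trans (r := lt) m' m _ hm'm (hbt i hit)
            · have : i = t.length := by omega
              subst this
              rw [List.getD_append_right _ _ _ _ le_rfl, Nat.sub_self]
              exact hm'm
          have hle := IH m' hm'm (t ++ [m]) hct' hbt'
          have hrel : R f (seg x ((t ++ [m]).length + 1), (t ++ [m]) ++ [m']) q := by
            refine ⟨⟨x, fun i hi => (seg_getD x (by rwa [seg_length] at hi)).symm,
              chainP_append hct' hbt'⟩, ?_, ?_⟩
            · refine ⟨x (t.length + 1), ?_⟩
              show seg x ((t ++ [m]).length + 1) = seg x (t.length + 1) ++ [x (t.length + 1)]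
              have hlen : (t ++ [m]).length = t.length + 1 := by simp
              rw [hlen, seg_succ]
            · exact ⟨m', rfl⟩
          have := IsWellFounded.rank_lt_of_rel hrel
          have : Ordinal.typein lt m' < IsWellFounded.rank (R f) q := lt_of_le_of_lt hle this
          rw [hm'] at this
          exact absurd this (lt_irrefl _)
      -- conclude: type ≤ rank root
      have htype : Ordinal.type lt ≤ IsWellFounded.rank (R f) ([], []) := by
        by_contra hcon
        push_neg at hcon
        obtain ⟨m, hm⟩ := Ordinal.typein_surj lt hcon
        have h0 : Ordinal.typein lt m ≤ IsWellFounded.rank (R f) (seg x 1, [m]) := by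
          have := claim m [] (by intro i j hij hj; simp at hj)
            (by intro i hi; simp at hi)
          simpa using this
        have hrel : R f (seg x 1, [m]) ([], []) := by
          refine ⟨⟨x, fun i hi => (seg_getD x (by rwa [seg_length] at hi)).symm, ?_⟩,
            ⟨x 0, by rw [seg_succ]; rfl⟩, ⟨m, rfl⟩⟩
          intro i j hij hj
          simp at hj; omega
        have := lt_of_le_of_lt h0 (IsWellFounded.rank_lt_of_rel hrel)
        rw [hm] at this
        exact absurd this (lt_irrefl _)
      exact lt_of_le_of_lt htype (lt_add_of_pos_right _ zero_lt_one)
end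

section
/- Let X be a Polish space, ≤ an F_σ quasi-order on X whose associated equivalence relation ≅ has uncountably many classes. Then either ≤ admits a perfect antichain (hence (X,≤) is not thin), or (X,≤) contains an infinite strictly increasing sequence x_0 < x_1 < x_2 < ⋯. -/
open Set Metric Topology Filter

namespace FsigmaQO

section Basic

variable {X : Type*} [TopologicalSpace X]

/-- A set is small if countably many points hit all equivalence classes of its points. -/
def Small (le : X → X → Prop) (S : Set X) : Prop :=
  ∃ D : Set X, D.Countable ∧ ∀ x ∈ S, ∃ d ∈ D, le x d ∧ le d x

/-- Points all of whose neighborhoods are not small. -/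
def Ybig (le : X → X → Prop) : Set X :=
  {x | ∀ U : Set X, IsOpen U → x ∈ U → ¬ Small le U}

variable {le : X → X → Prop}

theorem Small.mono {S T : Set X} (h : S ⊆ T) (hT : Small le T) : Small le S := by
  obtain ⟨D, hD, hcov⟩ := hT
  exact ⟨D, hD, fun x hx => hcov x (h hx)⟩

theorem isClosed_Ybig : IsClosed (Ybig le) := by
  rw [← isOpen_compl_iff]
  rw [isOpen_iff_mem_nhds]
  intro x hx
  simp only [Ybig, mem_compl_iff, mem_setOf_eq, not_forall] at hx
  obtain ⟨U, hU, hxU, hsmall⟩ := hx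
  rcases not_not.mp (by simpa using hsmall) with h
  exact Filter.mem_of_superset (hU.mem_nhds hxU)
    (fun y hy => by
      simp only [Ybig, mem_compl_iff, mem_setOf_eq, not_forall]
      exact ⟨U, hU, hy, by simpa using h⟩)

variable [SecondCountableTopology X]

theorem coverYc : ∃ D : Set X, D.Countable ∧
    ∀ x ∈ (Ybig le)ᶜ, ∃ d ∈ D, le x d ∧ le d x := by
  classical
  set ι := {U : Set X // IsOpen U ∧ Small le U}
  obtain ⟨T, hTc, hTeq⟩ := TopologicalSpace.isOpen_iUnion_countable
    (fun i : ι => (i : Set X)) (fun i => i.2.1)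
  choose D hDc hDcov using fun i : ι => i.2.2
  refine ⟨⋃ i ∈ T, D i, hTc.biUnion (fun i _ => hDc i), ?_⟩
  intro x hx
  have hxU : x ∈ ⋃ i : ι, (i : Set X) := by
    simp only [Ybig, mem_compl_iff, mem_setOf_eq, not_forall] at hx
    obtain ⟨U, hU, hxU, hsm⟩ := hx
    have hsm' : Small le U := not_not.mp (by simpa using hsm)
    exact mem_iUnion.mpr ⟨⟨U, hU, hsm'⟩, hxU⟩
  rw [← hTeq] at hxU
  obtain ⟨i, hiT, hxi⟩ := by simpa using hxU
  obtain ⟨d, hd, hld⟩ := hDcov i x hxi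
  exact ⟨d, mem_biUnion hiT hd, hld⟩

/-- Every open set meeting `Ybig` has non-small trace. -/
theorem not_small_of_open_inter (hunc : ¬ Small le univ)
    {U : Set X} (hU : IsOpen U) (hne : (U ∩ Ybig le).Nonempty) :
    ¬ Small le (U ∩ Ybig le) := by
  rintro ⟨D, hDc, hcov⟩
  obtain ⟨x, hxU, hxY⟩ := hne
  obtain ⟨D₀, hD₀c, hcov₀⟩ := coverYc (le := le)
  refine hxY U hU hxU ⟨D ∪ D₀, hDc.union hD₀c, fun z hz => ?_⟩
  by_cases hzY : z ∈ Ybig le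
  · obtain ⟨d, hd, h⟩ := hcov z ⟨hz, hzY⟩
    exact ⟨d, Or.inl hd, h⟩
  · obtain ⟨d, hd, h⟩ := hcov₀ z hzY
    exact ⟨d, Or.inr hd, h⟩

theorem Ybig_nonempty (hunc : ¬ Small le univ) : (Ybig le).Nonempty := by
  by_contra h
  rw [not_nonempty_iff_eq_empty] at h
  obtain ⟨D₀, hD₀c, hcov₀⟩ := coverYc (le := le)
  exact hunc ⟨D₀, hD₀c, fun x _ => hcov₀ x (by simp [h])⟩

end Basic

section MetricPart

variable {X : Type*} [MetricSpace X]

/-- Everywhere-splitting property of an open set `W`. -/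
def Splits (le : X → X → Prop) (W : Set X) : Prop :=
  ∀ A B : Set X, IsOpen A → IsOpen B → (A ∩ Ybig le).Nonempty →
    (B ∩ Ybig le).Nonempty → A ∩ Ybig le ⊆ W → B ∩ Ybig le ⊆ W →
    ∃ a ∈ A ∩ Ybig le, ∃ b ∈ B ∩ Ybig le, ¬ le a b ∧ ¬ le b a

variable {le : X → X → Prop} {F : ℕ → Set (X × X)} {W : Set X}

theorem pair_refine (hF : ∀ n, IsClosed (F n))
    (hle : {p : X × X | le p.1 p.2} = ⋃ n, F n)
    (hsplit : Splits le W) {ι : Type*}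
    (L : List (ι × ι)) (n : ℕ) (G : ι → Set X)
    (hGopen : ∀ i, IsOpen (G i)) (hGne : ∀ i, (G i ∩ Ybig le).Nonempty)
    (hGW : ∀ i, G i ∩ Ybig le ⊆ W) :
    ∃ G' : ι → Set X, (∀ i, IsOpen (G' i)) ∧ (∀ i, (G' i ∩ Ybig le).Nonempty) ∧
      (∀ i, G' i ⊆ G i) ∧
      ∀ p ∈ L, p.1 ≠ p.2 → ∀ a ∈ G' p.1 ∩ Ybig le, ∀ b ∈ G' p.2 ∩ Ybig le,
        ∀ m ≤ n, (a, b) ∉ F m := by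
  classical
  induction L with
  | nil => exact ⟨G, hGopen, hGne, fun i => subset_rfl, by simp⟩
  | cons p L ih =>
    obtain ⟨G₁, h1open, h1ne, h1sub, h1pairs⟩ := ih
    by_cases hp : p.1 = p.2
    · refine ⟨G₁, h1open, h1ne, h1sub, ?_⟩
      rintro q hq hq12
      rcases List.mem_cons.mp hq with rfl | hq
      · exact absurd hp hq12
      · exact h1pairs q hq hq12
    · have h1W : ∀ i, G₁ i ∩ Ybig le ⊆ W :=
        fun i => (inter_subset_inter (h1sub i) subset_rfl).trans (hGW i)
      obtain ⟨a, ha, b, hb, hab, hba⟩ := hsplit (G₁ p.1) (G₁ p.2)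
        (h1open p.1) (h1open p.2) (h1ne p.1) (h1ne p.2) (h1W p.1) (h1W p.2)
      set K : Set (X × X) := ⋃ m ∈ Set.Iic n, F m with hKdef
      have hKclosed : IsClosed K :=
        (Set.finite_Iic n).isClosed_biUnion (fun m _ => hF m)
      have habK : (a, b) ∉ K := by
        intro h
        obtain ⟨m, _, hm⟩ := mem_iUnion₂.mp h
        exact hab (by
          have : (a, b) ∈ ⋃ k, F k := mem_iUnion.mpr ⟨m, hm⟩
          rw [← hle] at this; exact this)
      obtain ⟨U, V, hUopen, hVopen, haU, hbV, hUV⟩ :=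
        isOpen_prod_iff.mp hKclosed.isOpen_compl a b habK
      refine ⟨fun t => if t = p.1 then G₁ p.1 ∩ U else if t = p.2 then G₁ p.2 ∩ V else G₁ t,
        ?_, ?_, ?_, ?_⟩
      · intro i
        dsimp only
        split_ifs with h1 h2
        · exact (h1open p.1).inter hUopen
        · exact (h1open p.2).inter hVopen
        · exact h1open i
      · intro i
        dsimp only
        split_ifs with h1 h2
        · exact ⟨a, ⟨ha.1, haU⟩, ha.2⟩
        · exact ⟨b, ⟨hb.1, hbV⟩, hb.2⟩
        · exact h1ne i
      · intro i
        dsimp only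
        split_ifs with h1 h2
        · subst h1; exact (inter_subset_left).trans (h1sub p.1)
        · subst h2; exact (inter_subset_left).trans (h1sub p.2)
        · exact h1sub i
      · rintro q hq hq12
        rcases List.mem_cons.mp hq with rfl | hqL
        · intro x hx y hy
          rw [show (fun t => if t = q.1 then G₁ q.1 ∩ U else if t = q.2 then G₁ q.2 ∩ V else G₁ t) q.1
              = G₁ q.1 ∩ U from if_pos rfl] at hx
          rw [show (fun t => if t = q.1 then G₁ q.1 ∩ U else if t = q.2 then G₁ q.2 ∩ V else G₁ t) q.2
              = G₁ q.2 ∩ V from by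
                dsimp only; rw [if_neg (Ne.symm hq12), if_pos rfl]] at hy
          intro m hm hxy
          have : (x, y) ∈ K := by
            rw [hKdef]
            exact Set.mem_biUnion (Set.mem_Iic.mpr hm) hxy
          exact (hUV ⟨hx.1.2, hy.1.2⟩) this
        · intro x hx y hy
          refine h1pairs q hqL hq12 x ?_ y ?_
          · revert hx
            dsimp only
            split_ifs with h1 h2
            · exact fun h => ⟨by rw [h1]; exact h.1.1, h.2⟩
            · exact fun h => ⟨by rw [h2]; exact h.1.1, h.2⟩
            · exact id
          · revert hy
            dsimp only
            split_ifs with h1 h2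
            · exact fun h => ⟨by rw [h1]; exact h.1.1, h.2⟩
            · exact fun h => ⟨by rw [h2]; exact h.1.1, h.2⟩
            · exact id

theorem level_refine (hF : ∀ n, IsClosed (F n))
    (hle : {p : X × X | le p.1 p.2} = ⋃ n, F n)
    (hsplit : Splits le W) {ι : Type*} [Fintype ι] (n : ℕ) (G : ι → Set X)
    (hGopen : ∀ i, IsOpen (G i)) (hGne : ∀ i, (G i ∩ Ybig le).Nonempty)
    (hGW : ∀ i, G i ∩ Ybig le ⊆ W) :
    ∃ G' : ι → Set X, (∀ i, IsOpen (G' i)) ∧ (∀ i, (G' i ∩ Ybig le).Nonempty) ∧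
      (∀ i, closure (G' i) ⊆ G i) ∧
      (∀ i, ∀ x ∈ G' i, ∀ y ∈ G' i, dist x y ≤ 2 * (1/2 : ℝ)^n) ∧
      (∀ i j, i ≠ j → ∀ a ∈ G' i ∩ Ybig le, ∀ b ∈ G' j ∩ Ybig le,
        ∀ m ≤ n, (a, b) ∉ F m) := by
  classical
  obtain ⟨G₁, h1open, h1ne, h1sub, h1pairs⟩ := pair_refine hF hle hsplit
    (Finset.univ : Finset (ι × ι)).toList n G hGopen hGne hGW
  have pick : ∀ i : ι, ∃ c : X, ∃ r : ℝ, 0 < r ∧ r ≤ (1/2 : ℝ)^n ∧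
      c ∈ G₁ i ∩ Ybig le ∧ closure (ball c r) ⊆ G₁ i := by
    intro i
    obtain ⟨c, hc⟩ := h1ne i
    obtain ⟨ε, hε, hballε⟩ := Metric.isOpen_iff.mp (h1open i) c hc.1
    refine ⟨c, min (ε/2) ((1/2:ℝ)^n), ?_, min_le_right _ _, hc, ?_⟩
    · exact lt_min (by linarith) (by positivity)
    · refine (closure_ball_subset_closedBall).trans ?_
      refine (Metric.closedBall_subset_ball ?_).trans hballε
      exact lt_of_le_of_lt (min_le_left _ _) (by linarith)
  choose c r hr hrle hcmem hcl using pick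
  refine ⟨fun i => ball (c i) (r i), fun i => isOpen_ball, ?_, ?_, ?_, ?_⟩
  · exact fun i => ⟨c i, mem_ball_self (hr i), (hcmem i).2⟩
  · exact fun i => (hcl i).trans (h1sub i)
  · intro i x hx y hy
    calc dist x y ≤ dist x (c i) + dist (c i) y := dist_triangle _ _ _
      _ ≤ r i + r i := by
          rw [mem_ball] at hx hy
          rw [dist_comm (c i) y]
          linarith
      _ ≤ 2 * (1/2:ℝ)^n := by have := hrle i; linarith
  · intro i j hij a ha b hb m hm
    refine h1pairs (i, j) (by simp [Finset.mem_toList]) hij a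
      ⟨(subset_closure.trans (hcl i)) ha.1, ha.2⟩ b
      ⟨(subset_closure.trans (hcl j)) hb.1, hb.2⟩ m hm
  

theorem antichain_of_splits [CompleteSpace X]
    (hrefl : ∀ x, le x x)
    (hF : ∀ n, IsClosed (F n)) (hle : {p : X × X | le p.1 p.2} = ⋃ n, F n)
    (hWopen : IsOpen W) (hWne : (W ∩ Ybig le).Nonempty) (hsplit : Splits le W) :
    ∃ P : Set X, Perfect P ∧ P.Nonempty ∧
      ∀ a ∈ P, ∀ b ∈ P, a ≠ b → ¬ le a b ∧ ¬ le b a := by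
  classical
  set Y := Ybig le with hYdef
  -- invariant for levels of the Cantor scheme
  set Props : ℕ → ((ℕ → Bool) → Set X) → Prop := fun n V =>
    (∀ σ, IsOpen (V σ)) ∧ (∀ σ, (V σ ∩ Y).Nonempty) ∧ (∀ σ, V σ ∩ Y ⊆ W) ∧
    (∀ σ τ : ℕ → Bool, (∀ k, k < n → σ k = τ k) → V σ = V τ) ∧
    (∀ σ, ∀ x ∈ V σ, ∀ y ∈ V σ, dist x y ≤ 2 * (1/2 : ℝ)^n) ∧
    (∀ σ τ : ℕ → Bool, ¬(∀ k, k < n → σ k = τ k) →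
      ∀ a ∈ V σ ∩ Y, ∀ b ∈ V τ ∩ Y, ∀ m, m < n → (a, b) ∉ F m) with hPropsdef
  have step : ∀ n (V : (ℕ → Bool) → Set X), Props n V →
      ∃ V' : (ℕ → Bool) → Set X, Props (n+1) V' ∧ ∀ σ, closure (V' σ) ⊆ V σ := by
    intro n V hV
    obtain ⟨hVopen, hVne, hVW, hVdep, hVdist, hVpairs⟩ := hV
    set ext : (Fin (n+1) → Bool) → (ℕ → Bool) :=
      fun t k => if h : k < n+1 then t ⟨k, h⟩ else false with hext
    obtain ⟨G', hopen, hne, hclsub, hdist, hpairs⟩ := level_refine hF hle hsplit (n+1)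
      (fun t : Fin (n+1) → Bool => V (ext t)) (fun t => hVopen _) (fun t => hVne _)
      (fun t => hVW _)
    set restr : (ℕ → Bool) → (Fin (n+1) → Bool) := fun σ k => σ k with hrestr
    have hagree : ∀ σ : ℕ → Bool, ∀ k, k < n → ext (restr σ) k = σ k := by
      intro σ k hk
      simp only [hext, hrestr, dif_pos (Nat.lt_succ_of_lt hk)]
    have hVeq : ∀ σ, V (ext (restr σ)) = V σ := fun σ => hVdep _ _ (hagree σ)
    have hcl' : ∀ σ, closure (G' (restr σ)) ⊆ V σ := by
      intro σ
      rw [← hVeq σ]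
      exact hclsub (restr σ)
    refine ⟨fun σ => G' (restr σ), ⟨fun σ => hopen _, fun σ => hne _, ?_, ?_, ?_, ?_⟩, hcl'⟩
    · intro σ
      exact (inter_subset_inter (subset_closure.trans (hcl' σ)) subset_rfl).trans (hVW σ)
    · intro σ τ h
      have : restr σ = restr τ := by
        funext k
        exact h k k.isLt
      exact congrArg G' this
    · intro σ x hx y hy
      exact hdist (restr σ) x hx y hy
    · intro σ τ h a ha b hb m hm
      have hne' : restr σ ≠ restr τ := by
        intro hcon
        exact h (fun k hk => congrFun hcon ⟨k, hk⟩)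
      exact hpairs (restr σ) (restr τ) hne' a ha b hb m (Nat.le_of_lt_succ hm |>.trans (Nat.le_succ n))
  obtain ⟨y₀, hy₀W, hy₀Y⟩ := hWne
  have base : Props 0 (fun _ => W ∩ ball y₀ (1/2)) := by
    refine ⟨fun σ => hWopen.inter isOpen_ball,
      fun σ => ⟨y₀, ⟨hy₀W, mem_ball_self (by norm_num)⟩, hy₀Y⟩,
      fun σ x hx => hx.1.1, fun _ _ _ => rfl, ?_, ?_⟩
    · intro σ x hx y hy
      have h1 : dist x y₀ < 1/2 := mem_ball.mp hx.2
      have h2 : dist y y₀ < 1/2 := mem_ball.mp hy.2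
      calc dist x y ≤ dist x y₀ + dist y₀ y := dist_triangle _ _ _
        _ ≤ 2 * (1/2:ℝ)^0 := by rw [dist_comm y₀ y]; norm_num; linarith
    · intro σ τ h
      exact absurd (fun k hk => absurd hk (Nat.not_lt_zero k)) h
  choose! stepV hstep using step
  let u : ℕ → ((ℕ → Bool) → Set X) :=
    fun n => Nat.rec (fun _ => W ∩ ball y₀ (1/2)) (fun n Vn => stepV n Vn) n
  have hus : ∀ n, u (n+1) = stepV n (u n) := fun n => rfl
  have hprops : ∀ n, Props n (u n) := by
    intro n
    induction n with
    | zero => exact base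
    | succ n ih => rw [hus n]; exact (hstep n (u n) ih).1
  have hlink : ∀ n σ, closure (u (n+1) σ) ⊆ u n σ := by
    intro n σ
    rw [hus n]
    exact (hstep n (u n) (hprops n)).2 σ
  have hmono : ∀ n σ, u (n+1) σ ⊆ u n σ := fun n σ => subset_closure.trans (hlink n σ)
  have hchain : ∀ n m, n ≤ m → ∀ σ, u m σ ⊆ u n σ := by
    intro n m hnm
    induction hnm with
    | refl => exact fun σ => subset_rfl
    | step h ih => exact fun σ => (hmono _ σ).trans (ih σ)
  choose pt hpt using fun n (σ : ℕ → Bool) => (hprops n).2.1 σ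
  have hsmall : ∀ ε : ℝ, 0 < ε → ∃ N : ℕ, 2 * (1/2:ℝ)^N < ε := by
    intro ε hε
    obtain ⟨N, hN⟩ := exists_pow_lt_of_lt_one (x := ε/2) (y := (1/2:ℝ)) (by linarith) (by norm_num)
    exact ⟨N, by linarith⟩
  have hf : ∀ σ : ℕ → Bool, ∃ z : X, z ∈ Y ∧ ∀ n, z ∈ u n σ := by
    intro σ
    have hcauchy : CauchySeq (fun n => pt n σ) := by
      rw [Metric.cauchySeq_iff]
      intro ε hε
      obtain ⟨N, hN⟩ := hsmall ε hε
      refine ⟨N, fun m hm k hk => ?_⟩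
      have h1 : pt m σ ∈ u N σ := hchain N m hm σ (hpt m σ).1
      have h2 : pt k σ ∈ u N σ := hchain N k hk σ (hpt k σ).1
      exact lt_of_le_of_lt ((hprops N).2.2.2.2.1 σ _ h1 _ h2) hN
    obtain ⟨z, hz⟩ := cauchySeq_tendsto_of_complete hcauchy
    refine ⟨z, ?_, ?_⟩
    · exact isClosed_Ybig.mem_of_tendsto hz
        (Filter.Eventually.of_forall fun n => (hpt n σ).2)
    · intro n
      refine hlink n σ ?_
      refine mem_closure_of_tendsto hz ?_
      rw [Filter.eventually_atTop]
      exact ⟨n+1, fun m hm => hchain (n+1) m hm σ (hpt m σ).1⟩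
  choose f hfY hfmem using hf
  have hkey : ∀ σ τ : ℕ → Bool, σ ≠ τ → ∀ m, (f σ, f τ) ∉ F m := by
    intro σ τ hne m
    have hk : ∃ k, σ k ≠ τ k := by
      by_contra h
      push_neg at h
      exact hne (funext h)
    obtain ⟨k, hk⟩ := hk
    have h1 : ¬(∀ j, j < max (m+1) (k+1) → σ j = τ j) :=
      fun h => hk (h k (lt_of_lt_of_le (Nat.lt_succ_self k) (le_max_right _ _)))
    exact (hprops (max (m+1) (k+1))).2.2.2.2.2 σ τ h1 (f σ)
      ⟨hfmem σ _, hfY σ⟩ (f τ) ⟨hfmem τ _, hfY τ⟩ m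
      (lt_of_lt_of_le (Nat.lt_succ_self m) (le_max_left _ _))
  have hincomp : ∀ σ τ : ℕ → Bool, σ ≠ τ → ¬ le (f σ) (f τ) := by
    intro σ τ h hle'
    have hmem : (f σ, f τ) ∈ ⋃ n, F n := by rw [← hle]; exact hle'
    obtain ⟨m, hm⟩ := mem_iUnion.mp hmem
    exact hkey σ τ h m hm
  have hclose : ∀ (σ τ : ℕ → Bool) (N : ℕ), (∀ k, k < N → τ k = σ k) →
      dist (f τ) (f σ) ≤ 2 * (1/2:ℝ)^N := by
    intro σ τ N h
    have heq : u N τ = u N σ := (hprops N).2.2.2.1 τ σ h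
    have h1 : f τ ∈ u N σ := heq ▸ hfmem τ N
    exact (hprops N).2.2.2.2.1 σ _ h1 _ (hfmem σ N)
  have hcont : Continuous f := by
    rw [continuous_iff_continuousAt]
    intro σ
    rw [ContinuousAt, Metric.tendsto_nhds]
    intro ε hε
    obtain ⟨N, hN⟩ := hsmall ε hε
    have hnb : (Set.Iio N).pi (fun k => ({σ k} : Set Bool)) ∈ 𝓝 σ :=
      set_pi_mem_nhds (Set.finite_Iio N)
        (fun k _ => (isOpen_discrete _).mem_nhds rfl)
    filter_upwards [hnb] with τ hτ
    exact lt_of_le_of_lt (hclose σ τ N (fun k hk => hτ k hk)) hN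
  refine ⟨Set.range f, ⟨(isCompact_range hcont).isClosed, ?_⟩, ⟨f (fun _ => false), mem_range_self _⟩, ?_⟩
  · -- Preperfect
    rintro x ⟨σ, rfl⟩
    rw [accPt_iff_nhds]
    intro U hU
    obtain ⟨ε, hε, hball⟩ := Metric.mem_nhds_iff.mp hU
    obtain ⟨N, hN⟩ := hsmall ε hε
    set τ := Function.update σ N (!(σ N)) with hτdef
    have hτσ : τ ≠ σ := by
      intro h
      have := congrFun h N
      rw [hτdef, Function.update_self] at this
      simp at this
    refine ⟨f τ, ⟨hball ?_, ⟨τ, rfl⟩⟩, fun h => hτσ ?_⟩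
    · rw [mem_ball]
      refine lt_of_le_of_lt (hclose σ τ N (fun k hk => ?_)) hN
      rw [hτdef]
      exact Function.update_of_ne (Nat.ne_of_lt hk) _ _
    · by_contra hne
      exact hincomp τ σ hne (h ▸ hrefl (f τ))
  · rintro a ⟨σ, rfl⟩ b ⟨τ, rfl⟩ hne
    have hστ : σ ≠ τ := fun h => hne (congrArg f h)
    exact ⟨hincomp σ τ hστ, hincomp τ σ hστ.symm⟩

end MetricPart

section Baire
variable {X : Type*} [MetricSpace X] [CompleteSpace X] [SecondCountableTopology X]
variable {le : X → X → Prop} {F : ℕ → Set (X × X)}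

theorem box_or_split
    (hF : ∀ n, IsClosed (F n)) (hle : {p : X × X | le p.1 p.2} = ⋃ n, F n)
    {A B : Set X} (hA : IsOpen A) (hB : IsOpen B)
    (hAne : (A ∩ Ybig le).Nonempty) (hBne : (B ∩ Ybig le).Nonempty) :
    (∃ a ∈ A ∩ Ybig le, ∃ b ∈ B ∩ Ybig le, ¬ le a b ∧ ¬ le b a) ∨
    (∃ A' B' : Set X, IsOpen A' ∧ IsOpen B' ∧
      (A' ∩ Ybig le).Nonempty ∧ (B' ∩ Ybig le).Nonempty ∧
      A' ⊆ A ∧ B' ⊆ B ∧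
      ((∀ a ∈ A' ∩ Ybig le, ∀ b ∈ B' ∩ Ybig le, le a b) ∨
       (∀ a ∈ A' ∩ Ybig le, ∀ b ∈ B' ∩ Ybig le, le b a))) := by
  classical
  by_cases hsplit : ∃ a ∈ A ∩ Ybig le, ∃ b ∈ B ∩ Ybig le, ¬ le a b ∧ ¬ le b a
  · exact Or.inl hsplit
  right
  push_neg at hsplit
  -- every pair is comparable
  have hcomp : ∀ x ∈ A ∩ Ybig le, ∀ y ∈ B ∩ Ybig le, le x y ∨ le y x := by
    intro x hx y hy
    by_contra h
    push_neg at h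
    exact h.2 (hsplit x hx y hy h.1)
  obtain ⟨a, haA, haY⟩ := hAne
  obtain ⟨b, hbB, hbY⟩ := hBne
  obtain ⟨ra, hra, hraA⟩ := Metric.isOpen_iff.mp hA a haA
  obtain ⟨rb, hrb, hrbB⟩ := Metric.isOpen_iff.mp hB b hbB
  set CA := closure (ball a (ra / 2) ∩ Ybig le) with hCA
  set CB := closure (ball b (rb / 2) ∩ Ybig le) with hCB
  have hCAsub : CA ⊆ A ∩ Ybig le := by
    rw [hCA]
    have h1 : closure (ball a (ra / 2) ∩ Ybig le) ⊆ closedBall a (ra / 2) ∩ Ybig le := by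
      apply closure_minimal (inter_subset_inter Metric.ball_subset_closedBall subset_rfl)
      exact Metric.isClosed_closedBall.inter isClosed_Ybig
    refine h1.trans (inter_subset_inter ?_ subset_rfl)
    refine (Metric.closedBall_subset_ball ?_).trans hraA
    linarith
  have hCBsub : CB ⊆ B ∩ Ybig le := by
    rw [hCB]
    have h1 : closure (ball b (rb / 2) ∩ Ybig le) ⊆ closedBall b (rb / 2) ∩ Ybig le := by
      apply closure_minimal (inter_subset_inter Metric.ball_subset_closedBall subset_rfl)
      exact Metric.isClosed_closedBall.inter isClosed_Ybig
    refine h1.trans (inter_subset_inter ?_ subset_rfl)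
    refine (Metric.closedBall_subset_ball ?_).trans hrbB
    linarith
  have haCA : a ∈ CA := subset_closure ⟨Metric.mem_ball_self (by linarith), haY⟩
  have hbCB : b ∈ CB := subset_closure ⟨Metric.mem_ball_self (by linarith), hbY⟩
  set T : Set (X × X) := CA ×ˢ CB with hT
  have hTclosed : IsClosed T := (isClosed_closure).prod isClosed_closure
  haveI : CompleteSpace T := hTclosed.completeSpace_coe
  haveI : Nonempty T := ⟨⟨(a, b), haCA, hbCB⟩⟩
  set K : ℕ × Bool → Set T := fun nb =>
    Subtype.val ⁻¹' (if nb.2 then F nb.1 else Prod.swap ⁻¹' F nb.1) with hK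
  have hKclosed : ∀ nb, IsClosed (K nb) := by
    rintro ⟨n, _ | _⟩
    · exact ((hF n).preimage continuous_swap).preimage continuous_subtype_val
    · exact (hF n).preimage continuous_subtype_val
  have hKcover : ⋃ nb, K nb = univ := by
    rw [eq_univ_iff_forall]
    rintro ⟨⟨x, y⟩, hxCA, hyCB⟩
    have := hcomp x (hCAsub hxCA) y (hCBsub hyCB)
    rcases this with h | h
    · have : (x, y) ∈ ⋃ n, F n := by rw [← hle]; exact h
      obtain ⟨n, hn⟩ := mem_iUnion.mp this
      exact mem_iUnion.mpr ⟨(n, true), by simpa [hK] using hn⟩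
    · have : (y, x) ∈ ⋃ n, F n := by rw [← hle]; exact h
      obtain ⟨n, hn⟩ := mem_iUnion.mp this
      exact mem_iUnion.mpr ⟨(n, false), by simpa [hK] using hn⟩
  obtain ⟨⟨n, bo⟩, q, hq⟩ := nonempty_interior_of_iUnion_of_closed hKclosed hKcover
  have hqnhds : K (n, bo) ∈ 𝓝 q := mem_interior_iff_mem_nhds.mp hq
  rw [nhds_subtype, Filter.mem_comap] at hqnhds
  obtain ⟨N, hN, hNsub⟩ := hqnhds
  have hNpair : N ∈ 𝓝 ((q : X × X).1, (q : X × X).2) := by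
    simpa using hN
  rw [mem_nhds_prod_iff] at hNpair
  obtain ⟨U, hU, V, hV, hUV⟩ := hNpair
  obtain ⟨U', hU'sub, hU'open, hqU'⟩ := _root_.mem_nhds_iff.mp hU
  obtain ⟨V', hV'sub, hV'open, hqV'⟩ := _root_.mem_nhds_iff.mp hV
  have hq1 : (q : X × X).1 ∈ CA := q.2.1
  have hq2 : (q : X × X).2 ∈ CB := q.2.2
  -- U' meets ball a (ra/2) ∩ Ybig
  have hAmeet : (U' ∩ (ball a (ra / 2) ∩ Ybig le)).Nonempty := by
    have := hq1
    rw [hCA, _root_.mem_closure_iff] at this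
    exact this U' hU'open hqU'
  have hBmeet : (V' ∩ (ball b (rb / 2) ∩ Ybig le)).Nonempty := by
    have := hq2
    rw [hCB, _root_.mem_closure_iff] at this
    exact this V' hV'open hqV'
  refine ⟨U' ∩ ball a (ra / 2), V' ∩ ball b (rb / 2),
    hU'open.inter Metric.isOpen_ball, hV'open.inter Metric.isOpen_ball,
    ⟨hAmeet.choose, ⟨⟨hAmeet.choose_spec.1, hAmeet.choose_spec.2.1⟩, hAmeet.choose_spec.2.2⟩⟩,
    ⟨hBmeet.choose, ⟨⟨hBmeet.choose_spec.1, hBmeet.choose_spec.2.1⟩, hBmeet.choose_spec.2.2⟩⟩,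
    ?_, ?_, ?_⟩
  · exact (inter_subset_right).trans ((Metric.ball_subset_ball (by linarith)).trans hraA)
  · exact (inter_subset_right).trans ((Metric.ball_subset_ball (by linarith)).trans hrbB)
  · have key : ∀ x, x ∈ (U' ∩ ball a (ra / 2)) ∩ Ybig le →
        ∀ y, y ∈ (V' ∩ ball b (rb / 2)) ∩ Ybig le →
        ((x, y) ∈ (if bo then F n else Prod.swap ⁻¹' F n)) := by
      rintro x ⟨⟨hxU', hxball⟩, hxY⟩ y ⟨⟨hyV', hyball⟩, hyY⟩
      have hxCA : x ∈ CA := subset_closure ⟨hxball, hxY⟩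
      have hyCB : y ∈ CB := subset_closure ⟨hyball, hyY⟩
      have hmem : ((x, y) : X × X) ∈ T := ⟨hxCA, hyCB⟩
      have : (⟨(x, y), hmem⟩ : T) ∈ K (n, bo) := by
        apply hNsub
        show ((x, y) : X × X) ∈ N
        exact hUV ⟨hU'sub hxU', hV'sub hyV'⟩
      simpa [hK] using this
    have hFle : ∀ p : X × X, p ∈ F n → le p.1 p.2 := by
      intro p hp
      have : p ∈ ⋃ m, F m := mem_iUnion.mpr ⟨n, hp⟩
      rw [← hle] at this
      exact this
    cases bo
    · right
      intro x hx y hy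
      have := key x hx y hy
      simp only [if_neg Bool.false_ne_true] at this
      exact hFle (y, x) this
    · left
      intro x hx y hy
      have := key x hx y hy
      simp only [if_pos rfl] at this
      exact hFle (x, y) this

end Baire

end FsigmaQO

open FsigmaQO in
/-- An F_σ quasi-order on a Polish space whose associated equivalence
relation has uncountably many classes either admits a perfect antichain (it is not
thin) or contains an infinite strictly increasing sequence. -/
theorem fsigma_quasiorder_dichotomy
    {X : Type*} [TopologicalSpace X] [PolishSpace X]
    (le : X → X → Prop)
    (hrefl : ∀ x, le x x)
    (htrans : ∀ x y z, le x y → le y z → le x z)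
    (hFσ : ∃ F : ℕ → Set (X × X), (∀ n, IsClosed (F n)) ∧
      {p : X × X | le p.1 p.2} = ⋃ n, F n)
    (huncount : ¬ ∃ D : Set X, D.Countable ∧ ∀ x : X, ∃ d ∈ D, le x d ∧ le d x) :
    (∃ P : Set X, Perfect P ∧ P.Nonempty ∧
      ∀ a ∈ P, ∀ b ∈ P, a ≠ b → ¬ le a b ∧ ¬ le b a) ∨
    (∃ x : ℕ → X, ∀ n, le (x n) (x (n + 1)) ∧ ¬ le (x (n + 1)) (x n)) := by
  classical
  letI := TopologicalSpace.upgradeIsCompletelyMetrizable X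
  obtain ⟨F, hF, hle⟩ := hFσ
  have hunc : ¬ Small le univ := by
    rintro ⟨D, hD, h⟩
    exact huncount ⟨D, hD, fun x => h x (mem_univ x)⟩
  have hYne : (Ybig le).Nonempty := Ybig_nonempty hunc
  by_cases hcase : ∃ W : Set X, IsOpen W ∧ (W ∩ Ybig le).Nonempty ∧ Splits le W
  · obtain ⟨W, hWo, hWne, hWs⟩ := hcase
    exact Or.inl (antichain_of_splits hrefl hF hle hWo hWne hWs)
  · right
    push_neg at hcase
    have hstep : ∀ W : Set X, IsOpen W → (W ∩ Ybig le).Nonempty →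
        ∃ AB : Set X × Set X, IsOpen AB.1 ∧ IsOpen AB.2 ∧
          (AB.1 ∩ Ybig le).Nonempty ∧ (AB.2 ∩ Ybig le).Nonempty ∧
          AB.1 ∩ Ybig le ⊆ W ∧
          ∀ a ∈ AB.1 ∩ Ybig le, ∀ b ∈ AB.2 ∩ Ybig le, le a b := by
      intro W hWo hWne
      have hns := hcase W hWo hWne
      rw [Splits] at hns
      push_neg at hns
      obtain ⟨A, B, hAo, hBo, hAne, hBne, hAW, hBW, hnos⟩ := hns
      rcases box_or_split hF hle hAo hBo hAne hBne with
        ⟨a, ha, b, hb, h1, h2⟩ | ⟨A', B', hA'o, hB'o, hA'ne, hB'ne, hA'sub, hB'sub, hor⟩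
      · exact absurd (hnos a ha b hb h1) h2
      · rcases hor with hbox | hbox
        · exact ⟨(A', B'), hA'o, hB'o, hA'ne, hB'ne,
            (inter_subset_inter hA'sub subset_rfl).trans hAW, hbox⟩
        · exact ⟨(B', A'), hB'o, hA'o, hB'ne, hA'ne,
            (inter_subset_inter hB'sub subset_rfl).trans hBW,
            fun x hx y hy => hbox y hy x hx⟩
    choose! g hg1 hg2 hg3 hg4 hg5 hg6 using hstep
    let w : ℕ → Set X := fun n => Nat.rec univ (fun _ Wn => (g Wn).2) n
    have hwrec : ∀ n, w (n+1) = (g (w n)).2 := fun n => rfl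
    have hw : ∀ n, IsOpen (w n) ∧ (w n ∩ Ybig le).Nonempty := by
      intro n
      induction n with
      | zero => exact ⟨isOpen_univ, by simpa [show w 0 = univ from rfl] using hYne⟩
      | succ n ih =>
        rw [hwrec]
        exact ⟨hg2 (w n) ih.1 ih.2, hg4 (w n) ih.1 ih.2⟩
    have hbox : ∀ n, ∀ a ∈ (g (w n)).1 ∩ Ybig le, ∀ b ∈ (g (w n)).2 ∩ Ybig le, le a b :=
      fun n => hg6 (w n) (hw n).1 (hw n).2
    have hAprop : ∀ n, IsOpen (g (w n)).1 ∧ ((g (w n)).1 ∩ Ybig le).Nonempty :=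
      fun n => ⟨hg1 (w n) (hw n).1 (hw n).2, hg3 (w n) (hw n).1 (hw n).2⟩
    have hAsub : ∀ n, (g (w n)).1 ∩ Ybig le ⊆ w n :=
      fun n => hg5 (w n) (hw n).1 (hw n).2
    have hchoose : ∀ (n : ℕ) (x : X), x ∈ (g (w n)).1 ∩ Ybig le →
        ∃ z, (z ∈ (g (w (n+1))).1 ∩ Ybig le) ∧ le x z ∧ ¬ le z x := by
      intro n x hx
      have hnot : ¬ Small le ((g (w (n+1))).1 ∩ Ybig le) :=
        not_small_of_open_inter hunc (hAprop (n+1)).1 (hAprop (n+1)).2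
      rw [FsigmaQO.Small] at hnot
      push_neg at hnot
      obtain ⟨z, hz, hzd⟩ := hnot {x} (countable_singleton x)
      have hzB : z ∈ (g (w n)).2 ∩ Ybig le := by
        refine ⟨?_, hz.2⟩
        have hsub := hAsub (n+1) hz
        rw [hwrec n] at hsub
        exact hsub
      have hlexz : le x z := hbox n x hx z hzB
      exact ⟨z, hz, hlexz, fun hzx => hzd x rfl hzx hlexz⟩
    choose! nxt hnxt1 hnxt2 hnxt3 using hchoose
    obtain ⟨x₀, hx₀⟩ := (hAprop 0).2
    let s : ℕ → X := fun n => Nat.rec x₀ (fun n xn => nxt n xn) n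
    have hsrec : ∀ n, s (n+1) = nxt n (s n) := fun n => rfl
    have hsmem : ∀ n, s n ∈ (g (w n)).1 ∩ Ybig le := by
      intro n
      induction n with
      | zero => exact hx₀
      | succ n ih =>
        rw [hsrec]
        exact hnxt1 n (s n) ih
    refine ⟨s, fun n => ?_⟩
    constructor
    · have h2 := hnxt2 n (s n) (hsmem n)
      rwa [← hsrec n] at h2
    · have h3 := hnxt3 n (s n) (hsmem n)
      rwa [← hsrec n] at h3
end
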